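/- arXiv:2402.06321 — 6 statements merged into one kernel-verified Lean document; each statement's English description precedes it below -/
import Mathlib

section
/- Let d ≥ 2, let q : (0,1) → ℝ be measurable, set V(x) := q(|x|) for x ∈ B^d∖{0} and Q(t) := e^{-2t} q(e^{-t}) for t > 0. Then ‖V‖_{V_d} = |S^{d-1}| · sup_{j∈ℕ₀} ∫_{j·log 2}^{(j+1)·log 2} |Q(t)| dt, and consequently (1/3)·|S^{d-1}|·|||Q||| ≤ ‖V‖_{V_d} ≤ |S^{d-1}|·|||Q|||. -/
open MeasureTheory Real Set
open scoped ENNReal NNReal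

noncomputable section

/-- Euclidean space `ℝ^d`. -/
abbrev Edim (d : ℕ) := EuclideanSpace ℝ (Fin d)

/-- The open unit ball `B^d ⊂ ℝ^d`. -/
def unitBall (d : ℕ) : Set (Edim d) := Metric.ball 0 1

/-- `|S^{d-1}|`, the `(d-1)`-dimensional measure of the unit sphere, i.e. `d · ω_d`. -/
def sphereArea (d : ℕ) : ℝ := d * (volume (Metric.ball (0 : Edim d) 1)).toReal

/-- The annulus `U_b = {x : b < |x| < 1}`. -/
def annulusU (d : ℕ) (b : ℝ) : Set (Edim d) := {x : Edim d | b < ‖x‖ ∧ ‖x‖ < 1}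

/-- The `𝒱_d` norm:
`‖V‖_{𝒱_d} = sup_{j ∈ ℕ} ∫_{2^{-(j+1)} < |x| < 2^{-j}} |V(x)| |x|^{2-d} dx`, as an
extended real number. -/
def VdNorm (d : ℕ) (V : Edim d → ℝ) : ℝ≥0∞ :=
  ⨆ j : ℕ, ∫⁻ x in {x : Edim d | (2:ℝ) ^ (-(j:ℝ) - 1) < ‖x‖ ∧ ‖x‖ < (2:ℝ) ^ (-(j:ℝ))},
    ENNReal.ofReal (|V x| * ‖x‖ ^ ((2:ℝ) - (d:ℝ)))

/-- The constant `β_V = (2/|S^{d-1}|) · max( √(6 |S^{d-1}| ‖V‖), 3e ‖V‖ )`. -/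
def betaV (d : ℕ) (V : Edim d → ℝ) : ℝ :=
  (2 / sphereArea d) *
    max (Real.sqrt (6 * sphereArea d * (VdNorm d V).toReal))
      (3 * Real.exp 1 * (VdNorm d V).toReal)

/-- The constant `k_V = β_V - (d-2)/2`. -/
def kV (d : ℕ) (V : Edim d → ℝ) : ℝ := betaV d V - ((d:ℝ) - 2) / 2

/-- `b`, with derivative `b'` on `(0,1]`, is a solution of the radial equation of degree `k`:
`b ∈ C¹((0,1])`, `r ↦ r^{d-1} b'(r)` is locally absolutely continuous on `(0,1]` (encoded
via a locally integrable density `g` together with the fundamental theorem of calculus), and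
`-(r^{d-1}b'(r))'/r^{d-1} + (k(k+d-2)/r² + q(r)) b(r) = 0` for a.e. `r ∈ (0,1)`. -/
def IsRadialSolution (d : ℕ) (q : ℝ → ℝ) (k : ℕ) (b b' : ℝ → ℝ) : Prop :=
  (∀ r ∈ Set.Ioc (0:ℝ) 1, HasDerivWithinAt b (b' r) (Set.Ioc 0 1) r) ∧
  ContinuousOn b' (Set.Ioc 0 1) ∧
  ∃ g : ℝ → ℝ, MeasureTheory.LocallyIntegrableOn g (Set.Ioc 0 1) ∧
    (∀ r₁ ∈ Set.Ioc (0:ℝ) 1, ∀ r₂ ∈ Set.Ioc (0:ℝ) 1, r₁ ≤ r₂ →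
      r₂ ^ ((d:ℝ) - 1) * b' r₂ - r₁ ^ ((d:ℝ) - 1) * b' r₁ = ∫ t in r₁..r₂, g t) ∧
    (∀ᵐ r ∂(volume.restrict (Set.Ioo (0:ℝ) 1)),
      -(g r) / r ^ ((d:ℝ) - 1) + (((k:ℝ) * ((k:ℝ) + (d:ℝ) - 2)) / r ^ 2 + q r) * b r = 0)

/-- The normalized solution of the radial equation of degree `k` from Lemma 2.1:
`b(1) = 1` together with the weighted square integrability `∫₀¹ |b(r)|² r^{d-2} dr < ∞`. -/
def IsDtNSolution (d : ℕ) (q : ℝ → ℝ) (k : ℕ) (b b' : ℝ → ℝ) : Prop :=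
  IsRadialSolution d q k b b' ∧ b 1 = 1 ∧
    (∫⁻ r in Set.Ioo (0:ℝ) 1, ENNReal.ofReal ((b r) ^ 2 * r ^ ((d:ℝ) - 2))) < ⊤

/-- `lamk` is the generalized Dirichlet-to-Neumann eigenvalue `λ_k[V]` of the radial
potential with profile `q`: if there is a (necessarily unique) normalized solution `b_k` of
the radial equation of degree `k` which is square integrable for the weight `r^{d-2}`, then
`λ_k[V] = b_k'(1)`; otherwise `λ_k[V] = k`. -/
def IsGenEigenvalue (d : ℕ) (q : ℝ → ℝ) (k : ℕ) (lamk : ℝ) : Prop :=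
  (∃ b b' : ℝ → ℝ, (IsDtNSolution d q k b b' ∧
      ∀ c c' : ℝ → ℝ, IsDtNSolution d q k c c' → Set.EqOn c b (Set.Ioc 0 1)) ∧
      b' 1 = lamk) ∨
  (¬ (∃ b b' : ℝ → ℝ, IsDtNSolution d q k b b' ∧
      ∀ c c' : ℝ → ℝ, IsDtNSolution d q k c c' → Set.EqOn c b (Set.Ioc 0 1)) ∧
    lamk = k)

/-- `W` is a Born approximation of the radial potential `V = q(|·|) ∈ 𝒱_d`: `W` is a radial
measurable function such that, for some integer `k₀ > k_V`, `∫_{B^d} |W(x)||x|^{2k₀} dx < ∞`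
and `(1/|S^{d-1}|) ∫_{B^d} W(x) |x|^{2k} dx = λ_k[V] - k` for every integer `k ≥ k₀`. -/
def IsBornApprox (d : ℕ) (q : ℝ → ℝ) (W : Edim d → ℝ) : Prop :=
  Measurable W ∧ (∃ w : ℝ → ℝ, ∀ x, W x = w ‖x‖) ∧
  ∃ lam : ℕ → ℝ, (∀ k : ℕ, IsGenEigenvalue d q k (lam k)) ∧
    ∃ k₀ : ℕ, kV d (fun x : Edim d => q ‖x‖) < (k₀:ℝ) ∧
      (∫⁻ x in unitBall d, ENNReal.ofReal (|W x| * ‖x‖ ^ (2 * k₀))) < ⊤ ∧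
      ∀ k : ℕ, k₀ ≤ k →
        (sphereArea d)⁻¹ * ∫ x in unitBall d, W x * ‖x‖ ^ (2 * k) = lam k - (k:ℝ)

/-- `|||Q||| = sup_{y>0} ∫_y^{y+1} |Q(t)| dt`, as an extended real number. -/
def tripleNorm (Q : ℝ → ℝ) : ℝ≥0∞ :=
  ⨆ y : {y : ℝ // 0 < y}, ∫⁻ t in Set.Ioc y.1 (y.1 + 1), ENNReal.ofReal |Q t|


section AuxStatement1

open Metric

local notation "rdim" => Module.finrank ℝ

lemma lintegral_fun_norm_addHaar' {E : Type*} [NormedAddCommGroup E] [NormedSpace ℝ E]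
    [MeasurableSpace E] [BorelSpace E] [FiniteDimensional ℝ E] [Nontrivial E]
    (μ : Measure E) [μ.IsAddHaarMeasure] (f : ℝ → ℝ≥0∞) (hf : Measurable f) :
    ∫⁻ x, f ‖x‖ ∂μ = (rdim E : ℝ≥0∞) * μ (ball 0 1) *
      ∫⁻ r in Ioi (0:ℝ), ENNReal.ofReal (r ^ (rdim E - 1)) * f r := by
  have hlast : ∫⁻ r : Ioi (0:ℝ), f r ∂(Measure.volumeIoiPow (rdim E - 1))
      = ∫⁻ r in Ioi (0:ℝ), ENNReal.ofReal (r ^ (rdim E - 1)) * f r := by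
    rw [Measure.volumeIoiPow,
      lintegral_withDensity_eq_lintegral_mul _
        ((measurable_subtype_coe.pow_const _).ennreal_ofReal)
        (show Measurable fun r : Ioi (0:ℝ) => f r.1 from hf.comp measurable_subtype_coe),
      ← lintegral_subtype_comap measurableSet_Ioi
        (fun x : ℝ => ENNReal.ofReal (x ^ (rdim E - 1)) * f x)]
    rfl
  calc
    ∫⁻ x, f ‖x‖ ∂μ = ∫⁻ x in ({0}ᶜ : Set E), f ‖x‖ ∂μ := by
      rw [restrict_compl_singleton]
    _ = ∫⁻ x : ({0}ᶜ : Set E), f ‖x.1‖ ∂(μ.comap (↑)) :=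
      (lintegral_subtype_comap (measurableSet_singleton _).compl _).symm
    _ = ∫⁻ p : (sphere (0:E) 1 × Ioi (0:ℝ)), f p.2
          ∂(μ.toSphere.prod (.volumeIoiPow (rdim E - 1))) :=
      by simpa using μ.measurePreserving_homeomorphUnitSphereProd.lintegral_comp_emb
          (Homeomorph.measurableEmbedding _) (fun p => f p.2)
    _ = μ.toSphere univ * ∫⁻ r : Ioi (0:ℝ), f r ∂(Measure.volumeIoiPow (rdim E - 1)) := by
      rw [lintegral_prod (fun p : (sphere (0:E) 1 × Ioi (0:ℝ)) => f p.2)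
        ((hf.comp (measurable_subtype_coe.comp measurable_snd)).aemeasurable)]
      simp [lintegral_const, mul_comm]
    _ = _ := by rw [Measure.toSphere_apply_univ, hlast]

lemma lintegral_image_eq_lintegral_abs_deriv_mul' {s : Set ℝ} {f f' : ℝ → ℝ}
    (hs : MeasurableSet s) (hf' : ∀ x ∈ s, HasDerivWithinAt f (f' x) s x)
    (hf : InjOn f s) (g : ℝ → ℝ≥0∞) :
    ∫⁻ x in f '' s, g x = ∫⁻ x in s, ENNReal.ofReal |f' x| * g (f x) := by
  simpa only [ContinuousLinearMap.det_toSpanSingleton] using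
    lintegral_image_eq_lintegral_abs_det_fderiv_mul volume hs
      (fun x hx => (hf' x hx).hasFDerivWithinAt) hf g

lemma exp_neg_image_Ioo (c₁ c₂ : ℝ) :
    (fun t : ℝ => Real.exp (-t)) '' Ioo c₁ c₂ = Ioo (Real.exp (-c₂)) (Real.exp (-c₁)) := by
  ext r
  constructor
  · rintro ⟨t, ht, rfl⟩
    exact ⟨Real.exp_lt_exp.2 (by linarith [ht.2]), Real.exp_lt_exp.2 (by linarith [ht.1])⟩
  · intro hr
    have hr0 : 0 < r := lt_trans (Real.exp_pos _) hr.1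
    refine ⟨-Real.log r, ⟨?_, ?_⟩, by simp [Real.exp_log hr0]⟩
    · have h := Real.log_lt_log hr0 hr.2
      rw [Real.log_exp] at h; linarith
    · have h := Real.log_lt_log (Real.exp_pos _) hr.1
      rw [Real.log_exp] at h; linarith

lemma annulus_eq (d : ℕ) (hd : 2 ≤ d) (q : ℝ → ℝ) (hq : Measurable q) (j : ℕ) :
    ∫⁻ x in {x : Edim d | (2:ℝ) ^ (-(j:ℝ) - 1) < ‖x‖ ∧ ‖x‖ < (2:ℝ) ^ (-(j:ℝ))},
      ENNReal.ofReal (|q ‖x‖| * ‖x‖ ^ ((2:ℝ) - (d:ℝ)))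
    = (d : ℝ≥0∞) * volume (ball (0:Edim d) 1) *
      ∫⁻ t in Ioc ((j:ℝ) * Real.log 2) (((j:ℝ)+1) * Real.log 2),
        ENNReal.ofReal |Real.exp (-2*t) * q (Real.exp (-t))| := by
  haveI : NeZero d := ⟨by omega⟩
  set L : ℝ := Real.log 2 with hL
  set a : ℝ := (2:ℝ) ^ (-(j:ℝ) - 1) with hadef
  set b : ℝ := (2:ℝ) ^ (-(j:ℝ)) with hbdef
  have ha : 0 < a := Real.rpow_pos_of_pos two_pos _
  have hab : a < b := by
    apply Real.rpow_lt_rpow_of_exponent_lt (by norm_num)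
    linarith
  set g : ℝ → ℝ≥0∞ := fun r => ENNReal.ofReal (|q r| * r ^ ((2:ℝ) - (d:ℝ))) with hgdef
  have hrm : Measurable (fun r : ℝ => r ^ ((2:ℝ) - (d:ℝ))) := by measurability
  have hg : Measurable g := (hq.abs.mul hrm).ennreal_ofReal
  have h1 : ∫⁻ x in {x : Edim d | a < ‖x‖ ∧ ‖x‖ < b}, g ‖x‖
      = (d : ℝ≥0∞) * volume (ball (0:Edim d) 1) *
        ∫⁻ r in Ioi (0:ℝ), ENNReal.ofReal (r ^ (d - 1)) * (Ioo a b).indicator g r := by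
    have hset : {x : Edim d | a < ‖x‖ ∧ ‖x‖ < b} = (fun x : Edim d => ‖x‖) ⁻¹' Ioo a b := rfl
    rw [hset, ← lintegral_indicator (measurable_norm measurableSet_Ioo) (fun x : Edim d => g ‖x‖)]
    have : ∀ x : Edim d, ((fun x : Edim d => ‖x‖) ⁻¹' Ioo a b).indicator (fun x : Edim d => g ‖x‖) x
        = (Ioo a b).indicator g ‖x‖ := by
      intro x
      by_cases h : ‖x‖ ∈ Ioo a b
      · rw [Set.indicator_of_mem (mem_preimage.mpr h), Set.indicator_of_mem h]
      · rw [Set.indicator_of_notMem (fun hc => h (mem_preimage.mp hc)),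
          Set.indicator_of_notMem h]
    rw [lintegral_congr this,
      lintegral_fun_norm_addHaar' (volume : Measure (Edim d)) _ (hg.indicator measurableSet_Ioo),
      finrank_euclideanSpace_fin]
  have h2 : ∫⁻ r in Ioi (0:ℝ), ENNReal.ofReal (r ^ (d - 1)) * (Ioo a b).indicator g r
      = ∫⁻ r in Ioo a b, ENNReal.ofReal (r ^ (d - 1)) * g r := by
    have heq : ∀ r : ℝ, ENNReal.ofReal (r ^ (d - 1)) * (Ioo a b).indicator g r
        = (Ioo a b).indicator (fun r => ENNReal.ofReal (r ^ (d - 1)) * g r) r := by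
      intro r; by_cases h : r ∈ Ioo a b <;> simp [h]
    have hsub : Ioo a b ⊆ Ioi 0 := fun r hr => lt_trans ha hr.1
    rw [lintegral_congr heq, lintegral_indicator measurableSet_Ioo,
      Measure.restrict_restrict measurableSet_Ioo, inter_eq_left.mpr hsub]
  have h3 : ∫⁻ r in Ioo a b, ENNReal.ofReal (r ^ (d - 1)) * g r
      = ∫⁻ r in Ioo a b, ENNReal.ofReal (|q r| * r) := by
    apply setLIntegral_congr_fun measurableSet_Ioo
    intro r hr
    have hr0 : 0 < r := lt_trans ha hr.1
    rw [hgdef]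
    beta_reduce
    rw [← ENNReal.ofReal_mul (by positivity)]
    congr 1
    have hnp : (r : ℝ) ^ (d - 1) = r ^ ((d:ℝ) - 1) := by
      rw [← Real.rpow_natCast r (d - 1)]
      congr 1
      push_cast [Nat.cast_sub (by omega : 1 ≤ d)]
      ring
    have hre : r ^ ((d:ℝ)-1) * (|q r| * r ^ ((2:ℝ)-(d:ℝ)))
        = (r ^ ((d:ℝ)-1) * r ^ ((2:ℝ)-(d:ℝ))) * |q r| := by ring
    rw [hnp, hre, ← Real.rpow_add hr0,
      show ((d:ℝ)-1) + ((2:ℝ)-(d:ℝ)) = 1 by ring, Real.rpow_one]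
    ring
  have himg : (fun t : ℝ => Real.exp (-t)) '' Ioo ((j:ℝ) * L) (((j:ℝ)+1) * L) = Ioo a b := by
    have hae : a = Real.exp (-(((j:ℝ)+1) * L)) := by
      rw [hadef, Real.rpow_def_of_pos two_pos]; congr 1; ring
    have hbe : b = Real.exp (-((j:ℝ) * L)) := by
      rw [hbdef, Real.rpow_def_of_pos two_pos]; congr 1; ring
    rw [exp_neg_image_Ioo, ← hae, ← hbe]
  have h4 : ∫⁻ r in Ioo a b, ENNReal.ofReal (|q r| * r)
      = ∫⁻ t in Ioo ((j:ℝ) * L) (((j:ℝ)+1) * L),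
          ENNReal.ofReal |Real.exp (-2*t) * q (Real.exp (-t))| := by
    rw [← himg, lintegral_image_eq_lintegral_abs_deriv_mul' measurableSet_Ioo
      (f' := fun t => -Real.exp (-t))
      (fun t _ => by
        exact (((Real.hasDerivAt_exp (-t)).comp t (hasDerivAt_neg t)).hasDerivWithinAt).congr_deriv (by simp))
      (fun u _ v _ h => by
        have := Real.exp_injective h; simpa using this)]
    apply lintegral_congr
    intro t
    rw [abs_neg, abs_of_pos (Real.exp_pos _), ← ENNReal.ofReal_mul (Real.exp_pos _).le]
    congr 1
    rw [abs_mul, abs_of_pos (Real.exp_pos _), show (-2:ℝ)*t = -t + -t by ring, Real.exp_add]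
    ring
  rw [h1, h2, h3, h4, setLIntegral_congr Ioo_ae_eq_Ioc]

end AuxStatement1

/-- Remark 2.2 of the paper. For `d ≥ 2`, `q : (0,1) → ℝ` measurable,
`V(x) = q(|x|)` and `Q(t) = e^{-2t} q(e^{-t})`, one has
`‖V‖_{𝒱_d} = |S^{d-1}| · sup_j ∫_{j log 2}^{(j+1) log 2} |Q(t)| dt`, and consequently
`(1/3)|S^{d-1}| |||Q||| ≤ ‖V‖_{𝒱_d} ≤ |S^{d-1}| |||Q|||`. -/
theorem statement1 (d : ℕ) (hd : 2 ≤ d) (q : ℝ → ℝ) (hq : Measurable q) :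
    (VdNorm d (fun x : Edim d => q ‖x‖)
        = ENNReal.ofReal (sphereArea d) *
          ⨆ j : ℕ, ∫⁻ t in Set.Ioc ((j:ℝ) * Real.log 2) (((j:ℝ) + 1) * Real.log 2),
            ENNReal.ofReal |Real.exp (-2 * t) * q (Real.exp (-t))|) ∧
    ENNReal.ofReal (sphereArea d) *
        tripleNorm (fun t => Real.exp (-2 * t) * q (Real.exp (-t))) / 3
      ≤ VdNorm d (fun x : Edim d => q ‖x‖) ∧
    VdNorm d (fun x : Edim d => q ‖x‖)
      ≤ ENNReal.ofReal (sphereArea d) *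
          tripleNorm (fun t => Real.exp (-2 * t) * q (Real.exp (-t))) := by
  haveI : NeZero d := ⟨by omega⟩
  set L : ℝ := Real.log 2 with hLdef
  have hL0 : 0 < L := Real.log_pos one_lt_two
  have hL1 : L ≤ 1 := by
    have := Real.log_two_lt_d9; rw [hLdef]; linarith
  have hL2 : 1 ≤ 2 * L := by
    have := Real.log_two_gt_d9; rw [hLdef]; linarith
  set Q : ℝ → ℝ := fun t => Real.exp (-2 * t) * q (Real.exp (-t)) with hQdef
  have hQm : Measurable fun t : ℝ => ENNReal.ofReal |Q t| := by
    apply Measurable.ennreal_ofReal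
    apply Measurable.abs
    exact ((Real.measurable_exp.comp (measurable_id.const_mul (-2)))).mul
      (hq.comp (Real.measurable_exp.comp measurable_neg))
  set μQ : Measure ℝ := volume.withDensity (fun t => ENNReal.ofReal |Q t|) with hμQdef
  have hap : ∀ s : Set ℝ, MeasurableSet s →
      ∫⁻ t in s, ENNReal.ofReal |Q t| = μQ s := fun s hs => (withDensity_apply _ hs).symm
  have hσ : ENNReal.ofReal (sphereArea d)
      = (d : ℝ≥0∞) * volume (Metric.ball (0 : Edim d) 1) := by
    rw [sphereArea, ENNReal.ofReal_mul (by positivity), ENNReal.ofReal_natCast,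
      ENNReal.ofReal_toReal measure_ball_lt_top.ne]
  set S : ℝ≥0∞ := ⨆ j : ℕ, μQ (Ioc ((j:ℝ) * L) (((j:ℝ) + 1) * L)) with hSdef
  have memS : ∀ n : ℕ, μQ (Ioc ((n:ℝ) * L) (((n:ℝ) + 1) * L)) ≤ S :=
    fun n => le_iSup (fun j : ℕ => μQ (Ioc ((j:ℝ) * L) (((j:ℝ) + 1) * L))) n
  -- Part 1: VdNorm equals sphereArea times the dyadic sup
  have hVd : VdNorm d (fun x : Edim d => q ‖x‖) = ENNReal.ofReal (sphereArea d) * S := by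
    rw [VdNorm, hSdef, ENNReal.mul_iSup]
    apply iSup_congr
    intro j
    rw [hσ, ← hap _ measurableSet_Ioc]
    exact annulus_eq d hd q hq j
  have hTN : tripleNorm Q = ⨆ y : {y : ℝ // 0 < y}, μQ (Ioc y.1 (y.1 + 1)) := by
    rw [tripleNorm]
    exact iSup_congr fun y => hap _ measurableSet_Ioc
  refine ⟨?_, ?_, ?_⟩
  · rw [hVd]
    congr 1
    apply iSup_congr
    intro j
    exact (hap _ measurableSet_Ioc).symm
  · -- lower bound : (σ * |||Q|||) / 3 ≤ σ * S
    have hT3 : (⨆ y : {y : ℝ // 0 < y}, μQ (Ioc y.1 (y.1 + 1))) ≤ 3 * S := by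
      apply iSup_le
      rintro ⟨y, hy⟩
      set j : ℕ := ⌊y / L⌋₊ with hjdef
      have h1 : (j:ℝ) * L ≤ y := by
        have := Nat.floor_le (show 0 ≤ y / L by positivity)
        rw [← hjdef] at this
        calc (j:ℝ) * L ≤ (y / L) * L := by nlinarith
        _ = y := by field_simp
      have h2 : y < ((j:ℝ) + 1) * L := by
        have := Nat.lt_floor_add_one (y / L)
        rw [← hjdef] at this
        calc y = (y / L) * L := by field_simp
        _ < ((j:ℝ) + 1) * L := by nlinarith
      have hc12 : (j:ℝ) * L ≤ ((j:ℝ) + 1) * L := by nlinarith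
      have hc23 : ((j:ℝ) + 1) * L ≤ ((j:ℝ) + 2) * L := by nlinarith
      have hc34 : ((j:ℝ) + 2) * L ≤ ((j:ℝ) + 3) * L := by nlinarith
      have hsub : Ioc y (y + 1) ⊆ Ioc ((j:ℝ) * L) (((j:ℝ) + 3) * L) :=
        Ioc_subset_Ioc h1 (by nlinarith)
      have hunion : Ioc ((j:ℝ) * L) (((j:ℝ) + 3) * L)
          = (Ioc ((j:ℝ) * L) (((j:ℝ) + 1) * L) ∪ Ioc (((j:ℝ) + 1) * L) (((j:ℝ) + 2) * L))
            ∪ Ioc (((j:ℝ) + 2) * L) (((j:ℝ) + 3) * L) := by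
        rw [Ioc_union_Ioc_eq_Ioc hc12 hc23, Ioc_union_Ioc_eq_Ioc (le_trans hc12 hc23) hc34]
      have hm2 : μQ (Ioc (((j:ℝ) + 1) * L) (((j:ℝ) + 2) * L)) ≤ S := by
        have h := memS (j + 1)
        rw [show ((((j + 1 : ℕ)):ℝ) + 1) * L = ((j:ℝ) + 2) * L by push_cast; ring,
          show (((j + 1 : ℕ)):ℝ) * L = ((j:ℝ) + 1) * L by push_cast; ring] at h
        exact h
      have hm3 : μQ (Ioc (((j:ℝ) + 2) * L) (((j:ℝ) + 3) * L)) ≤ S := by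
        have h := memS (j + 2)
        rw [show ((((j + 2 : ℕ)):ℝ) + 1) * L = ((j:ℝ) + 3) * L by push_cast; ring,
          show (((j + 2 : ℕ)):ℝ) * L = ((j:ℝ) + 2) * L by push_cast; ring] at h
        exact h
      calc μQ (Ioc y (y + 1)) ≤ μQ (Ioc ((j:ℝ) * L) (((j:ℝ) + 3) * L)) := measure_mono hsub
        _ = μQ ((Ioc ((j:ℝ) * L) (((j:ℝ) + 1) * L) ∪ Ioc (((j:ℝ) + 1) * L) (((j:ℝ) + 2) * L))
              ∪ Ioc (((j:ℝ) + 2) * L) (((j:ℝ) + 3) * L)) := by rw [hunion]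
        _ ≤ μQ (Ioc ((j:ℝ) * L) (((j:ℝ) + 1) * L) ∪ Ioc (((j:ℝ) + 1) * L) (((j:ℝ) + 2) * L))
              + μQ (Ioc (((j:ℝ) + 2) * L) (((j:ℝ) + 3) * L)) := measure_union_le _ _
        _ ≤ (μQ (Ioc ((j:ℝ) * L) (((j:ℝ) + 1) * L))
              + μQ (Ioc (((j:ℝ) + 1) * L) (((j:ℝ) + 2) * L)))
              + μQ (Ioc (((j:ℝ) + 2) * L) (((j:ℝ) + 3) * L)) :=
          add_le_add_left (measure_union_le _ _) _
        _ ≤ (S + S) + S := add_le_add (add_le_add (memS j) hm2) hm3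
        _ = 3 * S := by ring
    rw [hVd, hTN]
    rw [ENNReal.div_le_iff (by norm_num) (by norm_num)]
    calc ENNReal.ofReal (sphereArea d) * (⨆ y : {y : ℝ // 0 < y}, μQ (Ioc y.1 (y.1 + 1)))
        ≤ ENNReal.ofReal (sphereArea d) * (3 * S) := mul_le_mul_right hT3 _
      _ = ENNReal.ofReal (sphereArea d) * S * 3 := by ring
  · -- upper bound : σ * S ≤ σ * |||Q|||
    have hS3 : S ≤ ⨆ y : {y : ℝ // 0 < y}, μQ (Ioc y.1 (y.1 + 1)) := by
      apply iSup_le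
      intro j
      rcases Nat.eq_zero_or_pos j with hj | hj
      · subst hj
        have hone : (((0:ℕ):ℝ) + 1) * L = L := by norm_num
        have hzero : ((0:ℕ):ℝ) * L = 0 := by norm_num
        rw [hone, hzero]
        have hmono : Monotone (fun n : ℕ => Ioc (L / ((n:ℝ) + 1)) L) := by
          intro m n hmn
          have hmn' : (m:ℝ) ≤ (n:ℝ) := by exact_mod_cast hmn
          apply Ioc_subset_Ioc_left
          gcongr
        have hUnion : (⋃ n : ℕ, Ioc (L / ((n:ℝ) + 1)) L) = Ioc 0 L := by
          ext t
          simp only [mem_iUnion, mem_Ioc]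
          constructor
          · rintro ⟨n, hn1, hn2⟩
            exact ⟨lt_of_le_of_lt (by positivity) hn1, hn2⟩
          · rintro ⟨ht0, htL⟩
            refine ⟨⌈L / t⌉₊, ?_, htL⟩
            rw [div_lt_iff₀ (by positivity)]
            have hceil := Nat.le_ceil (L / t)
            calc L = (L / t) * t := by field_simp
              _ ≤ ((⌈L / t⌉₊:ℝ)) * t := by nlinarith
              _ < t * ((⌈L / t⌉₊:ℝ) + 1) := by nlinarith
        rw [← hUnion, hmono.directed_le.measure_iUnion]
        apply iSup_le
        intro n
        have hnn : (0:ℝ) ≤ L / ((n:ℝ) + 1) := by positivity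
        have hsub : Ioc (L / ((n:ℝ) + 1)) L ⊆ Ioc (L / ((n:ℝ) + 1)) (L / ((n:ℝ) + 1) + 1) :=
          Ioc_subset_Ioc_right (by linarith)
        exact le_trans (measure_mono hsub)
          (le_iSup (fun y : {y : ℝ // 0 < y} => μQ (Ioc y.1 (y.1 + 1)))
            ⟨L / ((n:ℝ) + 1), by positivity⟩)
      · have hsub : Ioc ((j:ℝ) * L) (((j:ℝ) + 1) * L) ⊆ Ioc ((j:ℝ) * L) ((j:ℝ) * L + 1) := by
          apply Ioc_subset_Ioc_right
          nlinarith
        have hjpos : 0 < (j:ℝ) * L := by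
          have : (1:ℝ) ≤ (j:ℝ) := by exact_mod_cast hj
          nlinarith
        exact le_trans (measure_mono hsub)
          (le_iSup (fun y : {y : ℝ // 0 < y} => μQ (Ioc y.1 (y.1 + 1))) ⟨(j:ℝ) * L, hjpos⟩)
    rw [hVd, hTN]
    exact mul_le_mul_right hS3 _
end
end

section
/- Let a > 0 and f ∈ L¹(0,a). Suppose K and K̃ are measurable real-valued functions on {(t,s) : 0 ≤ s ≤ t ≤ a} such that each of them satisfies the integral equation K(t,s₂) = K(t,s₁) + ∫_{s₁}^{s₂} ∫_{y₂}^{t} K(y₁,y₂) K(t - y₁ + y₂, y₂) dy₁ dy₂ for all 0 < s₁ < s₂ < t < a, and each can be written in the form K(t,s) = f(t) + K₀(t,s) where K₀ is continuous on {(t,s) : 0 ≤ s ≤ t ≤ a} and K₀(t,0) = 0 for all t ∈ [0,a]. Then K and K̃ coincide: for every s ∈ [0,a], K(t,s) = K̃(t,s) for a.e. t ∈ (s,a). -/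
open MeasureTheory Real Set
open scoped ENNReal

noncomputable section

/-- The closed triangle `{(t,s) : 0 ≤ s ≤ t ≤ a}`. -/
def triangleK (a : ℝ) : Set (ℝ × ℝ) := {p : ℝ × ℝ | 0 ≤ p.2 ∧ p.2 ≤ p.1 ∧ p.1 ≤ a}

/-- Absolute convergence of the iterated integrals appearing in the integral equation
for `K`. -/
def KEqnIntegrable (a : ℝ) (K : ℝ → ℝ → ℝ) : Prop :=
  ∀ s₁ s₂ t : ℝ, 0 < s₁ → s₁ < s₂ → s₂ < t → t < a →
    (∀ y₂ ∈ Set.Icc s₁ s₂,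
      IntervalIntegrable (fun y₁ => K y₁ y₂ * K (t - y₁ + y₂) y₂) volume y₂ t) ∧
    IntervalIntegrable
      (fun y₂ => ∫ y₁ in y₂..t, K y₁ y₂ * K (t - y₁ + y₂) y₂) volume s₁ s₂

/-- `K` satisfies the integral equation
`K(t,s₂) = K(t,s₁) + ∫_{s₁}^{s₂} ∫_{y₂}^{t} K(y₁,y₂) K(t-y₁+y₂,y₂) dy₁ dy₂`
for all `0 < s₁ < s₂ < t < a`. -/
def KEqnHolds (a : ℝ) (K : ℝ → ℝ → ℝ) : Prop :=
  ∀ s₁ s₂ t : ℝ, 0 < s₁ → s₁ < s₂ → s₂ < t → t < a →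
    K t s₂ = K t s₁ +
      ∫ y₂ in s₁..s₂, ∫ y₁ in y₂..t, K y₁ y₂ * K (t - y₁ + y₂) y₂

/-- `K(t,s) = f(t) + K₀(t,s)` on the triangle, with `K₀` continuous there and
`K₀(·,0) = 0`. -/
def KDecomp (a : ℝ) (f : ℝ → ℝ) (K : ℝ → ℝ → ℝ) : Prop :=
  ∃ K₀ : ℝ → ℝ → ℝ,
    ContinuousOn (fun p : ℝ × ℝ => K₀ p.1 p.2) (triangleK a) ∧
    (∀ t ∈ Set.Icc (0:ℝ) a, K₀ t 0 = 0) ∧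
    ∀ t s : ℝ, 0 ≤ s → s ≤ t → t ≤ a → K t s = f t + K₀ t s

/-- Lemma 4.3 of the paper. Let `a > 0` and `f ∈ L¹(0,a)`. Two measurable
solutions of the integral equation on `{0 ≤ s ≤ t ≤ a}` which are continuous perturbations
`f(t) + K₀(t,s)` of `f` with `K₀(·,0) = 0` coincide: for every `s ∈ [0,a]`,
`K(t,s) = K̃(t,s)` for a.e. `t ∈ (s,a)`. -/
theorem statement9 (a : ℝ) (ha : 0 < a) (f : ℝ → ℝ)
    (hf : IntegrableOn f (Set.Ioo 0 a))
    (K K' : ℝ → ℝ → ℝ)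
    (hKm : Measurable ((triangleK a).indicator (Function.uncurry fun t s => K t s)))
    (hK'm : Measurable ((triangleK a).indicator (Function.uncurry fun t s => K' t s)))
    (hKint : KEqnIntegrable a K) (hK'int : KEqnIntegrable a K')
    (hKeq : KEqnHolds a K) (hK'eq : KEqnHolds a K')
    (hKdec : KDecomp a f K) (hK'dec : KDecomp a f K') :
    ∀ s ∈ Set.Icc (0:ℝ) a,
      ∀ᵐ t ∂(volume.restrict (Set.Ioo s a)), K t s = K' t s := by
  obtain ⟨K₀, hK₀c, hK₀0, hK₀d⟩ := hKdec
  obtain ⟨K₁, hK₁c, hK₁0, hK₁d⟩ := hK'dec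
  set D : ℝ → ℝ → ℝ := fun t s => K₀ t s - K₁ t s with hDdef
  have hDc : ContinuousOn (fun p : ℝ × ℝ => D p.1 p.2) (triangleK a) := hK₀c.sub hK₁c
  -- compactness of the triangle
  have htc : IsCompact (triangleK a) := by
    apply IsCompact.of_isClosed_subset (isCompact_Icc (a := ((0:ℝ),(0:ℝ))) (b := (a,a)))
    · have : triangleK a
          = {p : ℝ × ℝ | 0 ≤ p.2} ∩ ({p | p.2 ≤ p.1} ∩ {p | p.1 ≤ a}) := by
        ext p; simp [triangleK, and_assoc]
      rw [this]
      exact (isClosed_le continuous_const continuous_snd).inter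
        ((isClosed_le continuous_snd continuous_fst).inter
          (isClosed_le continuous_fst continuous_const))
    · rintro ⟨x,y⟩ ⟨h1,h2,h3⟩
      exact ⟨⟨le_trans h1 h2, h1⟩, ⟨h3, le_trans h2 h3⟩⟩
  -- bounds
  obtain ⟨M₀, hM₀⟩ := htc.exists_bound_of_continuousOn hK₀c
  obtain ⟨M₁, hM₁⟩ := htc.exists_bound_of_continuousOn hK₁c
  obtain ⟨M₂, hM₂⟩ := htc.exists_bound_of_continuousOn hDc
  set M : ℝ := max (max M₀ M₁) 0 with hMdef
  set M' : ℝ := max M₂ 0 with hM'def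
  have hMnn : 0 ≤ M := le_max_right _ _
  have hM'nn : 0 ≤ M' := le_max_right _ _
  have hK₀b : ∀ t s : ℝ, 0 ≤ s → s ≤ t → t ≤ a → |K₀ t s| ≤ M := by
    intro t s h1 h2 h3
    exact le_trans (hM₀ (t,s) ⟨h1,h2,h3⟩) (le_trans (le_max_left _ _) (le_max_left _ _))
  have hK₁b : ∀ t s : ℝ, 0 ≤ s → s ≤ t → t ≤ a → |K₁ t s| ≤ M := by
    intro t s h1 h2 h3
    exact le_trans (hM₁ (t,s) ⟨h1,h2,h3⟩) (le_trans (le_max_right _ _) (le_max_left _ _))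
  have hDb : ∀ t s : ℝ, 0 ≤ s → s ≤ t → t ≤ a → |D t s| ≤ M' := by
    intro t s h1 h2 h3
    exact le_trans (hM₂ (t,s) ⟨h1,h2,h3⟩) (le_max_left _ _)
  -- integral of |f|
  set B : ℝ := ∫ x in Set.Ioo (0:ℝ) a, |f x| with hBdef
  have hBnn : 0 ≤ B := setIntegral_nonneg measurableSet_Ioo (fun x _ => abs_nonneg _)
  have hfsub : ∀ c d : ℝ, 0 < c → c ≤ d → d < a → Set.uIoc c d ⊆ Set.Ioo 0 a := by
    intro c d h1 h2 h3
    rw [Set.uIoc_of_le h2]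
    intro x hx
    exact ⟨lt_of_lt_of_le h1 (le_of_lt hx.1), lt_of_le_of_lt hx.2 h3⟩
  have hfi : ∀ c d : ℝ, 0 < c → c ≤ d → d < a →
      IntervalIntegrable (fun y => |f y|) volume c d := by
    intro c d h1 h2 h3
    rw [intervalIntegrable_iff]
    exact IntegrableOn.mono_set hf.abs (hfsub c d h1 h2 h3)
  have hBle : ∀ c d : ℝ, 0 < c → c ≤ d → d < a → (∫ y in c..d, |f y|) ≤ B := by
    intro c d h1 h2 h3
    rw [intervalIntegral.integral_of_le h2]
    apply setIntegral_mono_set hf.abs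
    · exact Filter.Eventually.of_forall (fun x => abs_nonneg _)
    · exact Filter.Eventually.of_forall fun x hx =>
        (hfsub c d h1 h2 h3) (by rwa [Set.uIoc_of_le h2])
  set C : ℝ := 2 * B + 2 * M * a with hCdef
  have hCnn : 0 ≤ C := by positivity
  -- key step
  have key : ∀ ψ : ℝ → ℝ, Continuous ψ → (∀ r : ℝ, 0 ≤ r → 0 ≤ ψ r) →
      (∀ t s : ℝ, 0 < s → s < t → t < a → |D t s| ≤ ψ s) →
      ∀ t s : ℝ, 0 < s → s < t → t < a → |D t s| ≤ ∫ r in (0:ℝ)..s, C * ψ r := by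
    intro ψ hψc hψnn hψb t s h1 h2 h3
    have hCψint : ∀ u v : ℝ, IntervalIntegrable (fun r => C * ψ r) volume u v :=
      fun u v => (continuous_const.mul hψc).intervalIntegrable u v
    have stepA : ∀ s₁ ∈ Set.Ioo (0:ℝ) s, |D t s - D t s₁| ≤ ∫ r in s₁..s, C * ψ r := by
      intro s₁ hs₁m
      obtain ⟨hs₁0, hs₁s⟩ := hs₁m
      have hKe := hKeq s₁ s t hs₁0 hs₁s h2 h3
      have hK'e := hK'eq s₁ s t hs₁0 hs₁s h2 h3
      have hIK := hKint s₁ s t hs₁0 hs₁s h2 h3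
      have hIK' := hK'int s₁ s t hs₁0 hs₁s h2 h3
      have e1 := hK₀d t s h1.le h2.le h3.le
      have e2 := hK₀d t s₁ hs₁0.le (hs₁s.trans h2).le h3.le
      have e3 := hK₁d t s h1.le h2.le h3.le
      have e4 := hK₁d t s₁ hs₁0.le (hs₁s.trans h2).le h3.le
      rw [e1, e2] at hKe
      rw [e3, e4] at hK'e
      have hDid : D t s - D t s₁ =
          ∫ y₂ in s₁..s, ((∫ y₁ in y₂..t, K y₁ y₂ * K (t - y₁ + y₂) y₂)
            - ∫ y₁ in y₂..t, K' y₁ y₂ * K' (t - y₁ + y₂) y₂) := by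
        rw [intervalIntegral.integral_sub hIK.2 hIK'.2]
        simp only [hDdef]
        linarith
      -- inner bound
      have hinner : ∀ y₂ ∈ Set.Ioo s₁ s,
          ‖(∫ y₁ in y₂..t, K y₁ y₂ * K (t - y₁ + y₂) y₂)
            - ∫ y₁ in y₂..t, K' y₁ y₂ * K' (t - y₁ + y₂) y₂‖ ≤ C * ψ y₂ := by
        intro y₂ hy₂
        have hy2mem : y₂ ∈ Set.Icc s₁ s := ⟨hy₂.1.le, hy₂.2.le⟩
        have hy₂0 : 0 < y₂ := hs₁0.trans hy₂.1
        have hy₂t : y₂ < t := hy₂.2.trans h2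
        have hψ0 : 0 ≤ ψ y₂ := hψnn y₂ hy₂0.le
        rw [← intervalIntegral.integral_sub (hIK.1 y₂ hy2mem) (hIK'.1 y₂ hy2mem)]
        set g : ℝ → ℝ := fun y₁ => ψ y₂ * (|f (t + y₂ - y₁)| + M) + (|f y₁| + M) * ψ y₂
          with hgdef
        have hfc : IntervalIntegrable (fun y₁ => |f (t + y₂ - y₁)|) volume y₂ t := by
          have := ((hfi y₂ t hy₂0 hy₂t.le h3).comp_sub_left (t + y₂)).symm
          simpa using this
        have hgint : IntervalIntegrable g volume y₂ t :=
          ((hfc.add (intervalIntegrable_const (c := M))).const_mul (ψ y₂)).add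
            (((hfi y₂ t hy₂0 hy₂t.le h3).add (intervalIntegrable_const (c := M))).mul_const
              (ψ y₂))
        have hptb : ∀ᵐ y₁ ∂(volume.restrict (Set.uIoc y₂ t)),
            ‖K y₁ y₂ * K (t - y₁ + y₂) y₂ - K' y₁ y₂ * K' (t - y₁ + y₂) y₂‖ ≤ g y₁ := by
          rw [Set.uIoc_of_le hy₂t.le, ← Measure.restrict_congr_set Ioo_ae_eq_Ioc]
          apply ae_restrict_of_forall_mem measurableSet_Ioo
          intro y₁ hy₁
          set u := t - y₁ + y₂ with hu
          have hy₁a : y₁ < a := hy₁.2.trans h3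
          have huy₂ : y₂ < u := by simp only [hu]; linarith [hy₁.2]
          have hut : u < t := by simp only [hu]; linarith [hy₁.1]
          have hua : u < a := hut.trans h3
          have eK1 : K y₁ y₂ = f y₁ + K₀ y₁ y₂ := hK₀d y₁ y₂ hy₂0.le hy₁.1.le hy₁a.le
          have eK2 : K u y₂ = f u + K₀ u y₂ := hK₀d u y₂ hy₂0.le huy₂.le hua.le
          have eK'1 : K' y₁ y₂ = f y₁ + K₁ y₁ y₂ := hK₁d y₁ y₂ hy₂0.le hy₁.1.le hy₁a.le
          have eK'2 : K' u y₂ = f u + K₁ u y₂ := hK₁d u y₂ hy₂0.le huy₂.le hua.le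
          rw [eK1, eK2, eK'1, eK'2, Real.norm_eq_abs]
          have factor : (f y₁ + K₀ y₁ y₂) * (f u + K₀ u y₂)
              - (f y₁ + K₁ y₁ y₂) * (f u + K₁ u y₂)
              = D y₁ y₂ * (f u + K₀ u y₂) + (f y₁ + K₁ y₁ y₂) * D u y₂ := by
            simp only [hDdef]; ring
          rw [factor]
          have b1 : |D y₁ y₂| ≤ ψ y₂ := hψb y₁ y₂ hy₂0 hy₁.1 hy₁a
          have b2 : |D u y₂| ≤ ψ y₂ := hψb u y₂ hy₂0 huy₂ hua
          have b3 : |K₀ u y₂| ≤ M := hK₀b u y₂ hy₂0.le huy₂.le hua.le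
          have b4 : |K₁ y₁ y₂| ≤ M := hK₁b y₁ y₂ hy₂0.le hy₁.1.le hy₁a.le
          have step1 : |D y₁ y₂ * (f u + K₀ u y₂) + (f y₁ + K₁ y₁ y₂) * D u y₂|
              ≤ |D y₁ y₂| * |f u + K₀ u y₂| + |f y₁ + K₁ y₁ y₂| * |D u y₂| := by
            refine le_trans (abs_add_le _ _) ?_
            rw [abs_mul, abs_mul]
          have step2 : |D y₁ y₂| * |f u + K₀ u y₂| + |f y₁ + K₁ y₁ y₂| * |D u y₂|
              ≤ ψ y₂ * (|f u| + M) + (|f y₁| + M) * ψ y₂ := by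
            apply add_le_add
            · exact mul_le_mul b1 (le_trans (abs_add_le _ _) (add_le_add le_rfl b3))
                (abs_nonneg _) hψ0
            · exact mul_le_mul (le_trans (abs_add_le _ _) (add_le_add le_rfl b4)) b2
                (abs_nonneg _) (le_trans (abs_nonneg _)
                  (le_trans (abs_add_le _ _) (add_le_add le_rfl b4)))
          have step3 : ψ y₂ * (|f u| + M) + (|f y₁| + M) * ψ y₂ = g y₁ := by
            simp only [hgdef]
            rw [show t + y₂ - y₁ = u by rw [hu]; ring]
          linarith
        have hnorm := intervalIntegral.norm_integral_le_abs_of_norm_le hptb hgint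
        have hgnn : 0 ≤ ∫ y₁ in y₂..t, g y₁ := by
          apply intervalIntegral.integral_nonneg hy₂t.le
          intro x hx
          simp only [hgdef]
          positivity
        have hgval : (∫ y₁ in y₂..t, g y₁) ≤ C * ψ y₂ := by
          have i1 : (∫ y₁ in y₂..t, |f (t + y₂ - y₁)|) = ∫ x in y₂..t, |f x| := by
            rw [intervalIntegral.integral_comp_sub_left (fun x => |f x|) (t + y₂)]
            norm_num
          have expand : (∫ y₁ in y₂..t, g y₁)
              = ψ y₂ * ((∫ x in y₂..t, |f x|) + (t - y₂) * M)
                + ((∫ x in y₂..t, |f x|) + (t - y₂) * M) * ψ y₂ := by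
            simp only [hgdef]
            rw [intervalIntegral.integral_add
                  ((hfc.add (intervalIntegrable_const (c := M))).const_mul (ψ y₂))
                  (((hfi y₂ t hy₂0 hy₂t.le h3).add (intervalIntegrable_const (c := M))).mul_const
                    (ψ y₂)),
                intervalIntegral.integral_const_mul, intervalIntegral.integral_mul_const,
                intervalIntegral.integral_add hfc (intervalIntegrable_const (c := M)),
                intervalIntegral.integral_add (hfi y₂ t hy₂0 hy₂t.le h3)
                  (intervalIntegrable_const (c := M)),
                intervalIntegral.integral_const, i1]
            simp only [smul_eq_mul]
          rw [expand]
          have hIB : (∫ x in y₂..t, |f x|) ≤ B := hBle y₂ t hy₂0 hy₂t.le h3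
          have hd1 : (t - y₂) * M ≤ a * M := by
            apply mul_le_mul_of_nonneg_right _ hMnn
            linarith
          have hkey : (∫ x in y₂..t, |f x|) + (t - y₂) * M ≤ B + a * M :=
            add_le_add hIB hd1
          have := mul_le_mul_of_nonneg_left hkey hψ0
          have := mul_le_mul_of_nonneg_right hkey hψ0
          simp only [hCdef]
          nlinarith
        calc ‖∫ y₁ in y₂..t, (K y₁ y₂ * K (t - y₁ + y₂) y₂
                - K' y₁ y₂ * K' (t - y₁ + y₂) y₂)‖
            ≤ |∫ y₁ in y₂..t, g y₁| := hnorm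
          _ = ∫ y₁ in y₂..t, g y₁ := abs_of_nonneg hgnn
          _ ≤ C * ψ y₂ := hgval
      rw [hDid, ← Real.norm_eq_abs]
      have hbound : ∀ᵐ y₂ ∂(volume.restrict (Set.uIoc s₁ s)),
          ‖(∫ y₁ in y₂..t, K y₁ y₂ * K (t - y₁ + y₂) y₂)
            - ∫ y₁ in y₂..t, K' y₁ y₂ * K' (t - y₁ + y₂) y₂‖ ≤ C * ψ y₂ := by
        rw [Set.uIoc_of_le hs₁s.le, ← Measure.restrict_congr_set Ioo_ae_eq_Ioc]
        exact ae_restrict_of_forall_mem measurableSet_Ioo hinner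
      refine le_trans (intervalIntegral.norm_integral_le_abs_of_norm_le hbound (hCψint s₁ s))
        (le_of_eq (abs_of_nonneg ?_))
      apply intervalIntegral.integral_nonneg hs₁s.le
      intro x hx
      exact mul_nonneg hCnn (hψnn x (le_trans hs₁0.le hx.1))
    -- step B : take s₁ → 0⁺
    have hInt0s : ∀ s₁ : ℝ, 0 ≤ s₁ → s₁ ≤ s →
        (∫ r in s₁..s, C * ψ r) ≤ ∫ r in (0:ℝ)..s, C * ψ r := by
      intro s₁ h0 hss
      have hadj := intervalIntegral.integral_add_adjacent_intervals (hCψint 0 s₁) (hCψint s₁ s)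
      have hpos : 0 ≤ ∫ r in (0:ℝ)..s₁, C * ψ r :=
        intervalIntegral.integral_nonneg h0 (fun x hx => mul_nonneg hCnn (hψnn x hx.1))
      linarith
    have hev : ∀ s₁ ∈ Set.Ioo (0:ℝ) s, |D t s| ≤ |D t s₁| + ∫ r in (0:ℝ)..s, C * ψ r := by
      intro s₁ hs₁m
      have h := stepA s₁ hs₁m
      have h2' := hInt0s s₁ hs₁m.1.le hs₁m.2.le
      have habs : |D t s| ≤ |D t s - D t s₁| + |D t s₁| := by
        calc |D t s| = |(D t s - D t s₁) + D t s₁| := by ring_nf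
          _ ≤ |D t s - D t s₁| + |D t s₁| := abs_add_le _ _
      linarith
    have htend : Filter.Tendsto (fun s₁ => |D t s₁|) (nhdsWithin 0 (Set.Ioo 0 s)) (nhds 0) := by
      have hmaps : Set.MapsTo (fun s₁ : ℝ => ((t : ℝ), s₁)) (Set.Icc 0 s) (triangleK a) := by
        intro x hx
        exact ⟨hx.1, hx.2.trans h2.le, h3.le⟩
      have hcomp : ContinuousOn (fun s₁ : ℝ => D t s₁) (Set.Icc 0 s) :=
        hDc.comp (Continuous.continuousOn (Continuous.prodMk_right t)) hmaps
      have htt : Filter.Tendsto (fun s₁ : ℝ => D t s₁) (nhdsWithin 0 (Set.Icc 0 s))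
          (nhds (D t 0)) := hcomp 0 ⟨le_refl _, h1.le⟩
      have hD0 : D t 0 = 0 := by
        simp only [hDdef]
        rw [hK₀0 t ⟨(h1.trans h2).le, h3.le⟩, hK₁0 t ⟨(h1.trans h2).le, h3.le⟩, sub_zero]
      rw [hD0] at htt
      have habs := htt.abs
      rw [abs_zero] at habs
      exact habs.mono_left (nhdsWithin_mono 0 Set.Ioo_subset_Icc_self)
    have hc : (0:ℝ) ∈ closure (Set.Ioo 0 s) := by
      rw [closure_Ioo h1.ne]
      exact ⟨le_refl _, h1.le⟩
    haveI hne := mem_closure_iff_nhdsWithin_neBot.mp hc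
    have hlim : Filter.Tendsto (fun s₁ => |D t s₁| + ∫ r in (0:ℝ)..s, C * ψ r)
        (nhdsWithin 0 (Set.Ioo 0 s)) (nhds (0 + ∫ r in (0:ℝ)..s, C * ψ r)) :=
      htend.add tendsto_const_nhds
    rw [zero_add] at hlim
    exact ge_of_tendsto hlim (Filter.eventually_of_mem self_mem_nhdsWithin hev)
  -- induction
  have main : ∀ n : ℕ, ∀ t s : ℝ, 0 < s → s < t → t < a →
      |D t s| ≤ M' * (C * s) ^ n / (n.factorial : ℝ) := by
    intro n
    induction n with
    | zero =>
      intro t s h1 h2 h3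
      simpa using hDb t s h1.le h2.le h3.le
    | succ n ih =>
      intro t s h1 h2 h3
      have hψc : Continuous (fun r : ℝ => M' * (C * r) ^ n / (n.factorial : ℝ)) :=
        (continuous_const.mul ((continuous_const.mul continuous_id).pow n)).div_const _
      have hψnn : ∀ r : ℝ, 0 ≤ r → 0 ≤ M' * (C * r) ^ n / (n.factorial : ℝ) := by
        intro r hr; positivity
      have := key _ hψc hψnn ih t s h1 h2 h3
      refine le_trans this (le_of_eq ?_)
      have harr : ∀ r : ℝ, C * (M' * (C * r) ^ n / (n.factorial : ℝ))
          = (C ^ (n+1) * M' / (n.factorial : ℝ)) * r ^ n := by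
        intro r; rw [mul_pow]; ring
      simp_rw [harr]
      rw [intervalIntegral.integral_const_mul, integral_pow]
      have h1' : ((n:ℝ) + 1) ≠ 0 := by positivity
      have h2' : (n.factorial : ℝ) ≠ 0 := by
        exact_mod_cast Nat.factorial_ne_zero n
      rw [Nat.factorial_succ, mul_pow]
      push_cast
      field_simp
      ring
  -- D vanishes on the open region
  have Dzero : ∀ t s : ℝ, 0 < s → s < t → t < a → D t s = 0 := by
    intro t s h1 h2 h3
    have hub : |D t s| ≤ 0 := by
      have htend : Filter.Tendsto (fun n : ℕ => M' * (C * s) ^ n / (n.factorial : ℝ))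
          Filter.atTop (nhds 0) := by
        have := (FloorSemiring.tendsto_pow_div_factorial_atTop (K := ℝ) (C * s)).const_mul M'
        simpa [mul_div_assoc] using this
      exact ge_of_tendsto' htend (fun n => main n t s h1 h2 h3)
    have := abs_nonneg (D t s)
    have : |D t s| = 0 := le_antisymm hub this
    exact abs_eq_zero.mp this
  -- conclusion
  intro s hs
  apply ae_restrict_of_forall_mem measurableSet_Ioo
  intro t ht
  have h0s : 0 ≤ s := hs.1
  have hst : s ≤ t := ht.1.le
  have hta : t ≤ a := ht.2.le
  rw [hK₀d t s h0s hst hta, hK₁d t s h0s hst hta]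
  rcases eq_or_lt_of_le h0s with h | h
  · rw [← h, hK₀0 t ⟨le_trans h0s hst, hta⟩, hK₁0 t ⟨le_trans h0s hst, hta⟩]
  · have := Dzero t s h ht.1 ht.2
    have : K₀ t s = K₁ t s := by
      have := sub_eq_zero.mp this
      exact this
    rw [this]
end
end

section
/- Let b ∈ (0,1) and f ∈ L¹(b,1). Suppose U and Ũ are measurable real-valued functions on {(r,s) : b < r ≤ s ≤ 1} such that each of them satisfies the integral equation U(r,s₂) = U(r,s₁) + ∫_{s₂}^{s₁} y₂ ( ∫_r^{y₂} U(y₁,y₂) U(r·y₂/y₁, y₂) dy₁/y₁ ) dy₂ for all b < r < s₂ < s₁ < 1, and each can be written in the form U(r,s) = f(r) + U₀(r,s) where U₀ is continuous on {(r,s) : b < r ≤ s ≤ 1} and U₀(r,1) = 0 for all r ∈ (b,1]. Then U and Ũ coincide: for every s ∈ (b,1], U(r,s) = Ũ(r,s) for a.e. r ∈ (b,s). -/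
open MeasureTheory Real Set
open scoped ENNReal

noncomputable section

/-- The triangle `{(r,s) : b < r ≤ s ≤ 1}`. -/
def triangleU (b : ℝ) : Set (ℝ × ℝ) := {p : ℝ × ℝ | b < p.1 ∧ p.1 ≤ p.2 ∧ p.2 ≤ 1}

/-- Absolute convergence of the iterated integrals appearing in the integral equation
for `U`. -/
def UEqnIntegrable (b : ℝ) (U : ℝ → ℝ → ℝ) : Prop :=
  ∀ r s₂ s₁ : ℝ, b < r → r < s₂ → s₂ < s₁ → s₁ < 1 →
    (∀ y₂ ∈ Set.Icc s₂ s₁,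
      IntervalIntegrable (fun y₁ => U y₁ y₂ * U (r * y₂ / y₁) y₂ / y₁) volume r y₂) ∧
    IntervalIntegrable
      (fun y₂ => y₂ * ∫ y₁ in r..y₂, U y₁ y₂ * U (r * y₂ / y₁) y₂ / y₁) volume s₂ s₁

/-- `U` satisfies the integral equation
`U(r,s₂) = U(r,s₁) + ∫_{s₂}^{s₁} y₂ (∫_r^{y₂} U(y₁,y₂) U(r·y₂/y₁,y₂) dy₁/y₁) dy₂`
for all `b < r < s₂ < s₁ < 1`. -/
def UEqnHolds (b : ℝ) (U : ℝ → ℝ → ℝ) : Prop :=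
  ∀ r s₂ s₁ : ℝ, b < r → r < s₂ → s₂ < s₁ → s₁ < 1 →
    U r s₂ = U r s₁ +
      ∫ y₂ in s₂..s₁, y₂ * ∫ y₁ in r..y₂, U y₁ y₂ * U (r * y₂ / y₁) y₂ / y₁

/-- `U(r,s) = f(r) + U₀(r,s)` on the triangle, with `U₀` continuous there and
`U₀(·,1) = 0`. -/
def UDecomp (b : ℝ) (f : ℝ → ℝ) (U : ℝ → ℝ → ℝ) : Prop :=
  ∃ U₀ : ℝ → ℝ → ℝ,
    ContinuousOn (fun p : ℝ × ℝ => U₀ p.1 p.2) (triangleU b) ∧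
    (∀ r ∈ Set.Ioc b 1, U₀ r 1 = 0) ∧
    ∀ r s : ℝ, b < r → r ≤ s → s ≤ 1 → U r s = f r + U₀ r s
lemma stmt11_subst (b : ℝ) (hb0 : 0 < b) (f : ℝ → ℝ)
    (hF : IntegrableOn (fun x => |f x|) (Set.Ioc b 1))
    (ρ y₂ : ℝ) (hρ : b < ρ) (hρy : ρ ≤ y₂) (hy1 : y₂ ≤ 1) :
    IntegrableOn (fun y₁ => |f (ρ * y₂ / y₁)|) (Set.Ioc ρ y₂) ∧
      ∫ y₁ in Set.Ioc ρ y₂, |f (ρ * y₂ / y₁)| ≤ (1/b) * ∫ x in Set.Ioc b 1, |f x| := by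
  have hρ0 : 0 < ρ := hb0.trans hρ
  have hy₂0 : 0 < y₂ := lt_of_lt_of_le hρ0 hρy
  set c : ℝ := ρ * y₂ with hc
  have hc0 : 0 < c := mul_pos hρ0 hy₂0
  set s : Set ℝ := Set.Ioo ρ y₂ with hs
  set φ : ℝ → ℝ := fun u => c / u with hφ
  -- image
  have himem : ∀ u ∈ s, φ u ∈ s := by
    rintro u ⟨hu1, hu2⟩
    have hu0 : 0 < u := hρ0.trans hu1
    constructor
    · rw [lt_div_iff₀ hu0]
      calc ρ * u < ρ * y₂ := by nlinarith
        _ = c := rfl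
    · rw [div_lt_iff₀ hu0]
      calc c = ρ * y₂ := rfl
        _ < u * y₂ := by nlinarith
        _ = y₂ * u := by ring
  have hinv : ∀ u ∈ s, φ (φ u) = u := by
    rintro u ⟨hu1, hu2⟩
    have hu0 : u ≠ 0 := (hρ0.trans hu1).ne'
    show c / (c / u) = u
    field_simp [hc0.ne']
  have himage : φ '' s = s := by
    apply Set.Subset.antisymm
    · rintro x ⟨u, hu, rfl⟩; exact himem u hu
    · intro x hx
      exact ⟨φ x, himem x hx, hinv x hx⟩
  have hms : MeasurableSet s := measurableSet_Ioo
  have hder : ∀ u ∈ s, HasDerivWithinAt φ (-(c / u ^ 2)) s u := by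
    rintro u ⟨hu1, hu2⟩
    have hu0 : u ≠ 0 := (hρ0.trans hu1).ne'
    have h := (hasDerivAt_inv hu0).const_mul c
    have h2 : HasDerivAt (fun u : ℝ => c / u) (-(c / u ^ 2)) u := by
      have e : c * -(u ^ 2)⁻¹ = -(c / u ^ 2) := by field_simp
      rw [← e]
      simpa [div_eq_mul_inv] using h
    exact h2.hasDerivWithinAt
  have hinj : Set.InjOn φ s := by
    rintro u ⟨hu1, _⟩ v ⟨hv1, _⟩ h
    have hu0 : u ≠ 0 := (hρ0.trans hu1).ne'
    have hv0 : v ≠ 0 := (hρ0.trans hv1).ne'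
    have h' : u⁻¹ = v⁻¹ := mul_left_cancel₀ hc0.ne' (by
      simpa [hφ, div_eq_mul_inv] using h)
    exact inv_injective h'
  -- the transported integrand equals (c/u²)·|f u| on s
  have heqOn : Set.EqOn (fun u => |(-(c / u ^ 2))| • |f (c / φ u)|)
      (fun u => c / u ^ 2 * |f u|) s := by
    rintro u ⟨hu1, hu2⟩
    have hu0 : 0 < u := hρ0.trans hu1
    have h1 : |(-(c / u ^ 2))| = c / u ^ 2 := by
      rw [abs_neg, abs_of_pos (by positivity)]
    have h2 : c / φ u = u := by
      simp only [hφ]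
      field_simp
    simp only [smul_eq_mul, h1, h2]
  have hssub : s ⊆ Set.Ioc b 1 := fun x hx => ⟨hρ.trans hx.1, hx.2.le.trans hy1⟩
  have hbound : ∀ u ∈ s, c / u ^ 2 * |f u| ≤ (1/b) * |f u| := by
    rintro u ⟨hu1, hu2⟩
    have hu0 : 0 < u := hρ0.trans hu1
    have h1 : c / u ^ 2 ≤ 1 / b := by
      rw [div_le_div_iff₀ (by positivity) hb0]
      have : c ≤ u := by
        calc c = ρ * y₂ := rfl
          _ ≤ ρ * 1 := by nlinarith
          _ = ρ := by ring
          _ ≤ u := hu1.le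
      nlinarith
    nlinarith [abs_nonneg (f u)]
  -- integrability of the rhs integrand
  have hfint : IntegrableOn (fun u => |f u|) s := hF.mono_set hssub
  have htarget2 : IntegrableOn (fun u => c / u ^ 2 * |f u|) s := by
    apply Integrable.mono' (hfint.const_mul (1/b))
    · apply AEStronglyMeasurable.mul _ hfint.aestronglyMeasurable
      exact ((measurable_id.pow_const 2).inv.const_mul c).aestronglyMeasurable
    · filter_upwards [ae_restrict_mem hms] with u hu
      have hu0 : 0 < u := hρ0.trans hu.1
      rw [Real.norm_eq_abs, abs_of_nonneg (by positivity)]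
      simpa [div_eq_mul_inv] using hbound u hu
  have hG : IntegrableOn (fun y₁ => |f (c / y₁)|) s := by
    rw [← himage]
    rw [integrableOn_image_iff_integrableOn_abs_deriv_smul hms hder hinj]
    exact htarget2.congr_fun (fun u hu => (heqOn hu).symm) hms
  have hGIoc : IntegrableOn (fun y₁ => |f (c / y₁)|) (Set.Ioc ρ y₂) :=
    hG.congr_set_ae Ioo_ae_eq_Ioc.symm
  refine ⟨hGIoc, ?_⟩
  have e1 : ∫ y₁ in Set.Ioc ρ y₂, |f (c / y₁)| = ∫ y₁ in s, |f (c / y₁)| :=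
    (setIntegral_congr_set Ioo_ae_eq_Ioc).symm
  rw [e1]
  have e2 : ∫ y₁ in s, |f (c / y₁)| = ∫ u in s, |(-(c / u ^ 2))| • |f (c / φ u)| := by
    conv_lhs => rw [← himage]
    exact integral_image_eq_integral_abs_deriv_smul hms hder hinj (fun y₁ => |f (c / y₁)|)
  rw [e2, setIntegral_congr_fun hms heqOn]
  calc ∫ u in s, c / u ^ 2 * |f u|
      ≤ ∫ u in s, (1/b) * |f u| := by
        apply setIntegral_mono_on htarget2 (hfint.const_mul _) hms hbound
    _ = (1/b) * ∫ u in s, |f u| := by rw [integral_const_mul]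
    _ ≤ (1/b) * ∫ x in Set.Ioc b 1, |f x| := by
        apply mul_le_mul_of_nonneg_left _ (by positivity)
        apply setIntegral_mono_set hF (ae_of_all _ (fun x => abs_nonneg _))
        exact HasSubset.Subset.eventuallyLE hssub

set_option maxHeartbeats 2000000 in
lemma stmt11_core (b : ℝ) (hb0 : 0 < b) (f : ℝ → ℝ)
    (hF : IntegrableOn (fun x => |f x|) (Set.Ioc b 1))
    (U U' : ℝ → ℝ → ℝ)
    (hUint : UEqnIntegrable b U) (hU'int : UEqnIntegrable b U')
    (hUeq : UEqnHolds b U) (hU'eq : UEqnHolds b U')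
    (V W : ℝ → ℝ → ℝ)
    (hVc : ContinuousOn (fun p : ℝ × ℝ => V p.1 p.2) (triangleU b))
    (hWc : ContinuousOn (fun p : ℝ × ℝ => W p.1 p.2) (triangleU b))
    (hV1 : ∀ r ∈ Set.Ioc b 1, V r 1 = 0) (hW1 : ∀ r ∈ Set.Ioc b 1, W r 1 = 0)
    (hVeq : ∀ r s : ℝ, b < r → r ≤ s → s ≤ 1 → U r s = f r + V r s)
    (hWeq : ∀ r s : ℝ, b < r → r ≤ s → s ≤ 1 → U' r s = f r + W r s)
    (r₀ : ℝ) (hr₀ : b < r₀) (hr₀1 : r₀ ≤ 1) :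
    ∀ ρ τ : ℝ, r₀ ≤ ρ → ρ ≤ τ → τ ≤ 1 → V ρ τ = W ρ τ := by
  set D : ℝ → ℝ → ℝ := fun x y => V x y - W x y with hDdef
  have hDc : ContinuousOn (fun p : ℝ × ℝ => D p.1 p.2) (triangleU b) := hVc.sub hWc
  have hD1 : ∀ r : ℝ, b < r → r ≤ 1 → D r 1 = 0 := by
    intro r h1 h2
    simp only [hDdef, hV1 r ⟨h1, h2⟩, hW1 r ⟨h1, h2⟩, sub_zero]
  have hDU : ∀ x y : ℝ, b < x → x ≤ y → y ≤ 1 → U x y - U' x y = D x y := by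
    intro x y h1 h2 h3
    rw [hVeq x y h1 h2 h3, hWeq x y h1 h2 h3]
    simp only [hDdef]; ring
  -- compact bound
  set K : Set (ℝ × ℝ) := (Set.Icc r₀ 1 ×ˢ Set.Icc r₀ 1) ∩ {p : ℝ × ℝ | p.1 ≤ p.2} with hKdef
  have hKcomp : IsCompact K :=
    (isCompact_Icc.prod isCompact_Icc).inter_right (isClosed_le continuous_fst continuous_snd)
  have hKsub : K ⊆ triangleU b := by
    rintro ⟨x, y⟩ ⟨⟨⟨h1, _⟩, ⟨_, h4⟩⟩, h5⟩
    exact ⟨hr₀.trans_le h1, h5, h4⟩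
  have hKmem : ∀ x y : ℝ, r₀ ≤ x → x ≤ y → y ≤ 1 → ((x, y) : ℝ × ℝ) ∈ K := by
    intro x y h1 h2 h3
    exact ⟨⟨⟨h1, h2.trans h3⟩, ⟨h1.trans h2, h3⟩⟩, h2⟩
  obtain ⟨C₁, hC₁⟩ := hKcomp.exists_bound_of_continuousOn (hVc.mono hKsub)
  obtain ⟨C₂, hC₂⟩ := hKcomp.exists_bound_of_continuousOn (hWc.mono hKsub)
  set C : ℝ := max (max C₁ C₂) 0 with hCdef
  have hC0 : 0 ≤ C := le_max_right _ _
  have hCV : ∀ x y : ℝ, r₀ ≤ x → x ≤ y → y ≤ 1 → |V x y| ≤ C := by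
    intro x y h1 h2 h3
    have := hC₁ (x, y) (hKmem x y h1 h2 h3)
    simp only [Real.norm_eq_abs] at this
    exact this.trans ((le_max_left _ _).trans (le_max_left _ _))
  have hCW : ∀ x y : ℝ, r₀ ≤ x → x ≤ y → y ≤ 1 → |W x y| ≤ C := by
    intro x y h1 h2 h3
    have := hC₂ (x, y) (hKmem x y h1 h2 h3)
    simp only [Real.norm_eq_abs] at this
    exact this.trans ((le_max_right _ _).trans (le_max_left _ _))
  -- the sup function M
  set S : ℝ → Set ℝ := fun σ =>
    (fun p : ℝ × ℝ => |D p.1 p.2|) ''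
      {p : ℝ × ℝ | (r₀ ≤ p.1 ∧ p.1 ≤ p.2 ∧ p.2 ≤ 1) ∧ σ ≤ p.2} with hSdef
  set M : ℝ → ℝ := fun σ => sSup (S σ) with hMdef
  have hDabs : ∀ x y : ℝ, r₀ ≤ x → x ≤ y → y ≤ 1 → |D x y| ≤ 2 * C := by
    intro x y h1 h2 h3
    simp only [hDdef]
    calc |V x y - W x y| ≤ |V x y| + |W x y| := abs_sub _ _
      _ ≤ 2 * C := by
          have := hCV x y h1 h2 h3; have := hCW x y h1 h2 h3; linarith
  have hSbdd : ∀ σ, BddAbove (S σ) := by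
    intro σ
    refine ⟨2 * C, ?_⟩
    rintro x ⟨p, ⟨⟨h1, h2, h3⟩, _⟩, rfl⟩
    exact hDabs p.1 p.2 h1 h2 h3
  have hmemle : ∀ σ x y : ℝ, r₀ ≤ x → x ≤ y → y ≤ 1 → σ ≤ y → |D x y| ≤ M σ := by
    intro σ x y h1 h2 h3 h4
    exact le_csSup (hSbdd σ) ⟨(x, y), ⟨⟨h1, h2, h3⟩, h4⟩, rfl⟩
  have hMB : ∀ σ, M σ ≤ 2 * C := by
    intro σ
    apply Real.sSup_le _ (by positivity)
    rintro x ⟨p, ⟨⟨h1, h2, h3⟩, _⟩, rfl⟩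
    exact hDabs p.1 p.2 h1 h2 h3
  have hM0 : ∀ σ, 0 ≤ M σ := by
    intro σ
    rcases le_or_gt σ 1 with h | h
    · exact (abs_nonneg _).trans (hmemle σ 1 1 hr₀1 le_rfl le_rfl h)
    · have hSe : S σ = ∅ := by
        rw [Set.eq_empty_iff_forall_notMem]
        rintro x ⟨p, ⟨⟨_, _, h3⟩, h4⟩, rfl⟩
        exact absurd (h4.trans h3) (not_le.2 h)
      simp only [hMdef, hSe, Real.sSup_empty, le_refl]
  have hManti : Antitone M := by
    intro σ σ' h
    apply Real.sSup_le _ (hM0 σ)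
    rintro x ⟨p, ⟨hp, h4⟩, rfl⟩
    exact le_csSup (hSbdd σ) ⟨p, ⟨hp, h.trans h4⟩, rfl⟩
  have hMIoc : ∀ a₁ a₂ : ℝ, IntegrableOn M (Set.Ioc a₁ a₂) :=
    fun a₁ a₂ => (hManti.intervalIntegrable).1
  set F : ℝ := ∫ x in Set.Ioc b 1, |f x| with hFdef
  have hF0 : 0 ≤ F := setIntegral_nonneg measurableSet_Ioc fun x _ => abs_nonneg _
  set K₀ : ℝ := ((1 / b) * F + F + 2 * C) / b with hK₀def
  have hK₀ : 0 ≤ K₀ := by positivity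
  -- the inner bound
  have hinner : ∀ ρ s₂ s₁ : ℝ, r₀ ≤ ρ → ρ < s₂ → s₂ < s₁ → s₁ < 1 →
      ∀ y₂ ∈ Set.Ioc s₂ s₁,
        |y₂ * ((∫ y₁ in ρ..y₂, U y₁ y₂ * U (ρ * y₂ / y₁) y₂ / y₁) -
            ∫ y₁ in ρ..y₂, U' y₁ y₂ * U' (ρ * y₂ / y₁) y₂ / y₁)| ≤ K₀ * M y₂ := by
    intro ρ s₂ s₁ hρ hρs₂ h21 h11 y₂ hy₂
    have hbρ : b < ρ := hr₀.trans_le hρ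
    have hρ0 : 0 < ρ := hb0.trans hbρ
    have hρy₂ : ρ < y₂ := hρs₂.trans hy₂.1
    have hy₂1 : y₂ ≤ 1 := hy₂.2.trans h11.le
    have hy₂0 : 0 < y₂ := hρ0.trans hρy₂
    have hI1 := (hUint ρ s₂ s₁ hbρ hρs₂ h21 h11).1 y₂ ⟨hy₂.1.le, hy₂.2⟩
    have hI2 := (hU'int ρ s₂ s₁ hbρ hρs₂ h21 h11).1 y₂ ⟨hy₂.1.le, hy₂.2⟩
    have hAB : (∫ y₁ in ρ..y₂, U y₁ y₂ * U (ρ * y₂ / y₁) y₂ / y₁) -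
        (∫ y₁ in ρ..y₂, U' y₁ y₂ * U' (ρ * y₂ / y₁) y₂ / y₁)
        = ∫ y₁ in Set.Ioc ρ y₂,
            (U y₁ y₂ * U (ρ * y₂ / y₁) y₂ / y₁ - U' y₁ y₂ * U' (ρ * y₂ / y₁) y₂ / y₁) := by
      rw [← intervalIntegral.integral_sub hI1 hI2, intervalIntegral.integral_of_le hρy₂.le]
    rw [hAB]
    have hsub := stmt11_subst b hb0 f hF ρ y₂ hbρ hρy₂.le hy₂1
    have hfB : IntegrableOn (fun y₁ => |f y₁|) (Set.Ioc ρ y₂) :=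
      hF.mono_set (fun x hx => ⟨hbρ.trans hx.1, hx.2.trans hy₂1⟩)
    have hconst : IntegrableOn (fun _ : ℝ => 2 * C) (Set.Ioc ρ y₂) :=
      integrableOn_const measure_Ioc_lt_top.ne
    set dom : ℝ → ℝ := fun y₁ => M y₂ / b * (|f (ρ * y₂ / y₁)| + |f y₁| + 2 * C) with hdomdef
    have hdom : IntegrableOn dom (Set.Ioc ρ y₂) :=
      (((hsub.1.add hfB).add hconst).const_mul _)
    have hdiffint : IntegrableOn
        (fun y₁ => U y₁ y₂ * U (ρ * y₂ / y₁) y₂ / y₁ - U' y₁ y₂ * U' (ρ * y₂ / y₁) y₂ / y₁)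
        (Set.Ioc ρ y₂) := (hI1.sub hI2).1
    have hpt : ∀ y₁ ∈ Set.Ioc ρ y₂,
        |U y₁ y₂ * U (ρ * y₂ / y₁) y₂ / y₁ - U' y₁ y₂ * U' (ρ * y₂ / y₁) y₂ / y₁| ≤ dom y₁ := by
      rintro y₁ ⟨hy₁a, hy₁b⟩
      have hy₁0 : 0 < y₁ := hρ0.trans hy₁a
      have hby₁ : b < y₁ := hbρ.trans hy₁a
      set g : ℝ := ρ * y₂ / y₁ with hgdef
      have hgy₂ : g ≤ y₂ := by
        rw [hgdef, div_le_iff₀ hy₁0]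
        nlinarith
      have hρg : ρ ≤ g := by
        rw [hgdef, le_div_iff₀ hy₁0]
        nlinarith
      have hbg : b < g := hbρ.trans_le hρg
      have e1 := hDU y₁ y₂ hby₁ hy₁b hy₂1
      have e2 := hDU g y₂ hbg hgy₂ hy₂1
      have hsplit : U y₁ y₂ * U g y₂ / y₁ - U' y₁ y₂ * U' g y₂ / y₁
          = (D y₁ y₂ * U g y₂ + U' y₁ y₂ * D g y₂) / y₁ := by
        rw [← e1, ← e2]; ring
      have hUb : |U g y₂| ≤ |f g| + C := by
        rw [hVeq g y₂ hbg hgy₂ hy₂1]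
        exact (abs_add_le _ _).trans (add_le_add_right (hCV g y₂ (hρ.trans hρg) hgy₂ hy₂1) _)
      have hU'b : |U' y₁ y₂| ≤ |f y₁| + C := by
        rw [hWeq y₁ y₂ hby₁ hy₁b hy₂1]
        exact (abs_add_le _ _).trans (add_le_add_right (hCW y₁ y₂ (hρ.trans hy₁a.le) hy₁b hy₂1) _)
      have hD1b : |D y₁ y₂| ≤ M y₂ := hmemle y₂ y₁ y₂ (hρ.trans hy₁a.le) hy₁b hy₂1 le_rfl
      have hD2b : |D g y₂| ≤ M y₂ := hmemle y₂ g y₂ (hρ.trans hρg) hgy₂ hy₂1 le_rfl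
      have hnum : |D y₁ y₂ * U g y₂ + U' y₁ y₂ * D g y₂|
          ≤ M y₂ * (|f g| + C) + (|f y₁| + C) * M y₂ := by
        calc |D y₁ y₂ * U g y₂ + U' y₁ y₂ * D g y₂|
            ≤ |D y₁ y₂ * U g y₂| + |U' y₁ y₂ * D g y₂| := abs_add_le _ _
          _ = |D y₁ y₂| * |U g y₂| + |U' y₁ y₂| * |D g y₂| := by rw [abs_mul, abs_mul]
          _ ≤ M y₂ * (|f g| + C) + (|f y₁| + C) * M y₂ :=
              add_le_add (mul_le_mul hD1b hUb (abs_nonneg _) (hM0 y₂))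
                (mul_le_mul hU'b hD2b (abs_nonneg _) (by positivity))
      calc |U y₁ y₂ * U g y₂ / y₁ - U' y₁ y₂ * U' g y₂ / y₁|
          = |D y₁ y₂ * U g y₂ + U' y₁ y₂ * D g y₂| / y₁ := by
            rw [hsplit, abs_div, abs_of_pos hy₁0]
        _ ≤ (M y₂ * (|f g| + C) + (|f y₁| + C) * M y₂) / y₁ := by
            exact div_le_div_of_nonneg_right hnum hy₁0.le
        _ = M y₂ * (|f g| + |f y₁| + 2 * C) / y₁ := by ring
        _ ≤ M y₂ * (|f g| + |f y₁| + 2 * C) / b := by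
            apply div_le_div_of_nonneg_left _ hb0 hby₁.le
            exact mul_nonneg (hM0 y₂) (by positivity)
        _ = dom y₁ := by rw [hdomdef]; ring
    have hdomle : ∫ y₁ in Set.Ioc ρ y₂, dom y₁ ≤ K₀ * M y₂ := by
      have hA : ∫ y₁ in Set.Ioc ρ y₂, |f (ρ * y₂ / y₁)| ≤ (1 / b) * F := hsub.2
      have hB : ∫ y₁ in Set.Ioc ρ y₂, |f y₁| ≤ F := by
        apply setIntegral_mono_set hF (ae_of_all _ fun x => abs_nonneg _)
        exact HasSubset.Subset.eventuallyLE (fun x hx => ⟨hbρ.trans hx.1, hx.2.trans hy₂1⟩)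
      have hc : ∫ _ in Set.Ioc ρ y₂, (2 * C : ℝ) ≤ 2 * C := by
        rw [setIntegral_const, measureReal_def, Real.volume_Ioc, smul_eq_mul,
          ENNReal.toReal_ofReal (by linarith)]
        nlinarith
      have e : ∫ y₁ in Set.Ioc ρ y₂, dom y₁
          = M y₂ / b * ∫ y₁ in Set.Ioc ρ y₂, (|f (ρ * y₂ / y₁)| + |f y₁| + 2 * C) := by
        rw [hdomdef, integral_const_mul]
      have hadd1 : IntegrableOn (fun y₁ => |f (ρ * y₂ / y₁)| + |f y₁|) (Set.Ioc ρ y₂) :=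
        hsub.1.add hfB
      have e2 : ∫ y₁ in Set.Ioc ρ y₂, (|f (ρ * y₂ / y₁)| + |f y₁| + 2 * C)
          = (∫ y₁ in Set.Ioc ρ y₂, |f (ρ * y₂ / y₁)|) + (∫ y₁ in Set.Ioc ρ y₂, |f y₁|)
            + ∫ _ in Set.Ioc ρ y₂, (2 * C : ℝ) := by
        rw [integral_add hadd1 hconst, integral_add hsub.1 hfB]
      rw [e, e2]
      have hfact : M y₂ / b * ((1 / b) * F + F + 2 * C) = K₀ * M y₂ := by
        rw [hK₀def]; ring
      rw [← hfact]
      apply mul_le_mul_of_nonneg_left _ (div_nonneg (hM0 y₂) hb0.le)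
      exact add_le_add (add_le_add hA hB) hc
    calc |y₂ * ∫ y₁ in Set.Ioc ρ y₂,
          (U y₁ y₂ * U (ρ * y₂ / y₁) y₂ / y₁ - U' y₁ y₂ * U' (ρ * y₂ / y₁) y₂ / y₁)|
        = |y₂| * |∫ y₁ in Set.Ioc ρ y₂,
            (U y₁ y₂ * U (ρ * y₂ / y₁) y₂ / y₁ - U' y₁ y₂ * U' (ρ * y₂ / y₁) y₂ / y₁)| :=
          abs_mul _ _
      _ ≤ 1 * |∫ y₁ in Set.Ioc ρ y₂,
            (U y₁ y₂ * U (ρ * y₂ / y₁) y₂ / y₁ - U' y₁ y₂ * U' (ρ * y₂ / y₁) y₂ / y₁)| := by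
          apply mul_le_mul_of_nonneg_right _ (abs_nonneg _)
          rw [abs_of_pos hy₂0]; exact hy₂1
      _ = |∫ y₁ in Set.Ioc ρ y₂,
            (U y₁ y₂ * U (ρ * y₂ / y₁) y₂ / y₁ - U' y₁ y₂ * U' (ρ * y₂ / y₁) y₂ / y₁)| :=
          one_mul _
      _ ≤ ∫ y₁ in Set.Ioc ρ y₂,
            |U y₁ y₂ * U (ρ * y₂ / y₁) y₂ / y₁ - U' y₁ y₂ * U' (ρ * y₂ / y₁) y₂ / y₁| := by
          simpa [Real.norm_eq_abs] using
            norm_integral_le_integral_norm (μ := volume.restrict (Set.Ioc ρ y₂))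
              (fun y₁ => U y₁ y₂ * U (ρ * y₂ / y₁) y₂ / y₁ -
                U' y₁ y₂ * U' (ρ * y₂ / y₁) y₂ / y₁)
      _ ≤ ∫ y₁ in Set.Ioc ρ y₂, dom y₁ :=
          setIntegral_mono_on hdiffint.abs hdom measurableSet_Ioc hpt
      _ ≤ K₀ * M y₂ := hdomle
  -- the pointwise bound away from the diagonal
  have hP : ∀ ρ s₂ : ℝ, r₀ ≤ ρ → ρ < s₂ → s₂ < 1 →
      |D ρ s₂| ≤ K₀ * ∫ y in Set.Ioc s₂ 1, M y := by
    intro ρ s₂ hρ hρs₂ hs₂1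
    have hbρ : b < ρ := hr₀.trans_le hρ
    have hInt1 : IntegrableOn M (Set.Ioc s₂ 1) := hMIoc s₂ 1
    have hstep : ∀ s₁ ∈ Set.Ioo s₂ 1,
        |D ρ s₂| ≤ |D ρ s₁| + K₀ * ∫ y in Set.Ioc s₂ 1, M y := by
      rintro s₁ ⟨h21, h11⟩
      have hO1 := (hUint ρ s₂ s₁ hbρ hρs₂ h21 h11).2
      have hO2 := (hU'int ρ s₂ s₁ hbρ hρs₂ h21 h11).2
      have e := hUeq ρ s₂ s₁ hbρ hρs₂ h21 h11
      have e' := hU'eq ρ s₂ s₁ hbρ hρs₂ h21 h11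
      have hDeq : D ρ s₂ = D ρ s₁ + ∫ y₂ in s₂..s₁,
          ((y₂ * ∫ y₁ in ρ..y₂, U y₁ y₂ * U (ρ * y₂ / y₁) y₂ / y₁) -
            y₂ * ∫ y₁ in ρ..y₂, U' y₁ y₂ * U' (ρ * y₂ / y₁) y₂ / y₁) := by
        rw [← hDU ρ s₂ hbρ hρs₂.le (by linarith), ← hDU ρ s₁ hbρ (by linarith) h11.le,
          e, e', intervalIntegral.integral_sub hO1 hO2]
        ring
      rw [hDeq]
      refine (abs_add_le _ _).trans (add_le_add_right ?_ _)
      rw [intervalIntegral.integral_of_le h21.le]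
      have hint1 : IntegrableOn
          (fun y₂ => (y₂ * ∫ y₁ in ρ..y₂, U y₁ y₂ * U (ρ * y₂ / y₁) y₂ / y₁) -
            y₂ * ∫ y₁ in ρ..y₂, U' y₁ y₂ * U' (ρ * y₂ / y₁) y₂ / y₁)
          (Set.Ioc s₂ s₁) := (hO1.sub hO2).1
      have hint2 : IntegrableOn (fun y₂ => K₀ * M y₂) (Set.Ioc s₂ s₁) :=
        (hMIoc s₂ s₁).const_mul _
      calc |∫ y₂ in Set.Ioc s₂ s₁,
            ((y₂ * ∫ y₁ in ρ..y₂, U y₁ y₂ * U (ρ * y₂ / y₁) y₂ / y₁) -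
              y₂ * ∫ y₁ in ρ..y₂, U' y₁ y₂ * U' (ρ * y₂ / y₁) y₂ / y₁)|
          ≤ ∫ y₂ in Set.Ioc s₂ s₁,
            |(y₂ * ∫ y₁ in ρ..y₂, U y₁ y₂ * U (ρ * y₂ / y₁) y₂ / y₁) -
              y₂ * ∫ y₁ in ρ..y₂, U' y₁ y₂ * U' (ρ * y₂ / y₁) y₂ / y₁| := by
            simpa [Real.norm_eq_abs] using
              norm_integral_le_integral_norm (μ := volume.restrict (Set.Ioc s₂ s₁))
                (fun y₂ => (y₂ * ∫ y₁ in ρ..y₂, U y₁ y₂ * U (ρ * y₂ / y₁) y₂ / y₁) -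
                  y₂ * ∫ y₁ in ρ..y₂, U' y₁ y₂ * U' (ρ * y₂ / y₁) y₂ / y₁)
        _ ≤ ∫ y₂ in Set.Ioc s₂ s₁, K₀ * M y₂ := by
            apply setIntegral_mono_on hint1.abs hint2 measurableSet_Ioc
            intro y₂ hy₂
            have := hinner ρ s₂ s₁ hρ hρs₂ h21 h11 y₂ hy₂
            calc |(y₂ * ∫ y₁ in ρ..y₂, U y₁ y₂ * U (ρ * y₂ / y₁) y₂ / y₁) -
                  y₂ * ∫ y₁ in ρ..y₂, U' y₁ y₂ * U' (ρ * y₂ / y₁) y₂ / y₁|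
                = |y₂ * ((∫ y₁ in ρ..y₂, U y₁ y₂ * U (ρ * y₂ / y₁) y₂ / y₁) -
                    ∫ y₁ in ρ..y₂, U' y₁ y₂ * U' (ρ * y₂ / y₁) y₂ / y₁)| := by
                  rw [mul_sub]
              _ ≤ K₀ * M y₂ := this
        _ = K₀ * ∫ y₂ in Set.Ioc s₂ s₁, M y₂ := integral_const_mul _ _
        _ ≤ K₀ * ∫ y in Set.Ioc s₂ 1, M y := by
            apply mul_le_mul_of_nonneg_left _ hK₀
            apply setIntegral_mono_set hInt1 (ae_of_all _ hM0)
            exact HasSubset.Subset.eventuallyLE (Set.Ioc_subset_Ioc_right h11.le)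
    -- pass to the limit s₁ → 1⁻
    have hne : (nhdsWithin (1:ℝ) (Set.Ioo s₂ 1)).NeBot := by
      rw [← mem_closure_iff_nhdsWithin_neBot, closure_Ioo hs₂1.ne]
      exact ⟨hs₂1.le, le_rfl⟩
    have hmem1 : ((ρ, 1) : ℝ × ℝ) ∈ triangleU b := ⟨hbρ, show ρ ≤ (1:ℝ) by linarith, le_rfl⟩
    have hco : ContinuousWithinAt (fun p : ℝ × ℝ => D p.1 p.2) (triangleU b) (ρ, 1) :=
      hDc _ hmem1
    have hmap : Filter.Tendsto (fun s₁ : ℝ => ((ρ, s₁) : ℝ × ℝ))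
        (nhdsWithin 1 (Set.Ioo s₂ 1)) (nhdsWithin (ρ, 1) (triangleU b)) := by
      apply tendsto_nhdsWithin_of_tendsto_nhds_of_eventually_within
      · exact ((continuous_const.prodMk continuous_id).tendsto 1).mono_left nhdsWithin_le_nhds
      · filter_upwards [self_mem_nhdsWithin] with t ht
        exact ⟨hbρ, by linarith [ht.1], ht.2.le⟩
    have hDt : Filter.Tendsto (fun s₁ => D ρ s₁) (nhdsWithin 1 (Set.Ioo s₂ 1))
        (nhds (D ρ 1)) := hco.tendsto.comp hmap
    have htend : Filter.Tendsto
        (fun s₁ => |D ρ s₁| + K₀ * ∫ y in Set.Ioc s₂ 1, M y)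
        (nhdsWithin 1 (Set.Ioo s₂ 1))
        (nhds (K₀ * ∫ y in Set.Ioc s₂ 1, M y)) := by
      have h0 : |D ρ 1| = 0 := by rw [hD1 ρ hbρ (by linarith), abs_zero]
      have := (hDt.abs).add (tendsto_const_nhds
        (x := K₀ * ∫ y in Set.Ioc s₂ 1, M y) (f := nhdsWithin 1 (Set.Ioo s₂ 1)))
      rwa [h0, zero_add] at this
    exact ge_of_tendsto htend (by
      filter_upwards [self_mem_nhdsWithin] with t ht using hstep t ht)
  -- the pointwise bound on the closed triangle
  have hP' : ∀ ρ τ : ℝ, r₀ ≤ ρ → ρ ≤ τ → τ ≤ 1 →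
      |D ρ τ| ≤ K₀ * ∫ y in Set.Ioc τ 1, M y := by
    intro ρ τ hρ hρτ hτ1
    have hbρ : b < ρ := hr₀.trans_le hρ
    have hRHS0 : 0 ≤ K₀ * ∫ y in Set.Ioc τ 1, M y :=
      mul_nonneg hK₀ (setIntegral_nonneg measurableSet_Ioc fun y _ => hM0 y)
    rcases eq_or_lt_of_le hτ1 with h1 | hτlt1
    · subst h1
      rw [hD1 ρ hbρ hρτ, abs_zero]
      exact hRHS0
    rcases lt_or_eq_of_le hρτ with hρlt | hρeq
    · exact hP ρ τ hρ hρlt hτlt1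
    · -- ρ = τ : take the limit s₂ → τ⁺
      have hstep : ∀ s₂ ∈ Set.Ioo τ 1, |D ρ s₂| ≤ K₀ * ∫ y in Set.Ioc τ 1, M y := by
        rintro s₂ ⟨ha, hb'⟩
        refine (hP ρ s₂ hρ (hρeq ▸ ha) hb').trans (mul_le_mul_of_nonneg_left ?_ hK₀)
        apply setIntegral_mono_set (hMIoc τ 1) (ae_of_all _ hM0)
        exact HasSubset.Subset.eventuallyLE (Set.Ioc_subset_Ioc_left ha.le)
      have hne : (nhdsWithin τ (Set.Ioo τ 1)).NeBot := by
        rw [← mem_closure_iff_nhdsWithin_neBot, closure_Ioo hτlt1.ne]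
        exact ⟨le_rfl, hτ1⟩
      have hmem1 : ((ρ, τ) : ℝ × ℝ) ∈ triangleU b := ⟨hbρ, hρτ, hτ1⟩
      have hco : ContinuousWithinAt (fun p : ℝ × ℝ => D p.1 p.2) (triangleU b) (ρ, τ) :=
        hDc _ hmem1
      have hmap : Filter.Tendsto (fun s₂ : ℝ => ((ρ, s₂) : ℝ × ℝ))
          (nhdsWithin τ (Set.Ioo τ 1)) (nhdsWithin (ρ, τ) (triangleU b)) := by
        apply tendsto_nhdsWithin_of_tendsto_nhds_of_eventually_within
        · exact ((continuous_const.prodMk continuous_id).tendsto τ).mono_left nhdsWithin_le_nhds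
        · filter_upwards [self_mem_nhdsWithin] with t ht
          exact ⟨hbρ, show ρ ≤ t by nlinarith [ht.1, hρτ], ht.2.le⟩
      have hDt0 : Filter.Tendsto (fun s₂ => D ρ s₂) (nhdsWithin τ (Set.Ioo τ 1))
          (nhds (D ρ τ)) := hco.tendsto.comp hmap
      have hDt : Filter.Tendsto (fun s₂ => |D ρ s₂|) (nhdsWithin τ (Set.Ioo τ 1))
          (nhds |D ρ τ|) := hDt0.abs
      exact le_of_tendsto hDt (by
        filter_upwards [self_mem_nhdsWithin] with t ht using hstep t ht)
  -- the recursion for M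
  have hMrec : ∀ σ : ℝ, M σ ≤ K₀ * ∫ y in Set.Ioc σ 1, M y := by
    intro σ
    apply Real.sSup_le _
      (mul_nonneg hK₀ (setIntegral_nonneg measurableSet_Ioc fun y _ => hM0 y))
    rintro x ⟨p, ⟨⟨h1, h2, h3⟩, h4⟩, rfl⟩
    refine (hP' p.1 p.2 h1 h2 h3).trans (mul_le_mul_of_nonneg_left ?_ hK₀)
    exact setIntegral_mono_set (hMIoc σ 1) (ae_of_all _ hM0)
      (HasSubset.Subset.eventuallyLE (Set.Ioc_subset_Ioc_left h4))
  -- Gronwall iteration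
  have hiter : ∀ n : ℕ, ∀ σ : ℝ, r₀ ≤ σ → σ ≤ 1 →
      M σ ≤ 2 * C * (K₀ * (1 - σ)) ^ n / n.factorial := by
    intro n
    induction n with
    | zero => intro σ _ _; simpa using hMB σ
    | succ n ih =>
      intro σ hσ hσ1
      have hcont : Continuous (fun y : ℝ => 2 * C * (K₀ * (1 - y)) ^ n / n.factorial) := by
        fun_prop
      calc M σ ≤ K₀ * ∫ y in Set.Ioc σ 1, M y := hMrec σ
        _ ≤ K₀ * ∫ y in Set.Ioc σ 1, 2 * C * (K₀ * (1 - y)) ^ n / n.factorial := by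
            apply mul_le_mul_of_nonneg_left _ hK₀
            apply setIntegral_mono_on (hMIoc σ 1) (hcont.integrableOn_Ioc) measurableSet_Ioc
            intro y hy
            exact ih y (hσ.trans hy.1.le) hy.2
        _ = 2 * C * (K₀ * (1 - σ)) ^ (n + 1) / (n + 1).factorial := by
            rw [← intervalIntegral.integral_of_le hσ1]
            have e1 : ∫ y in σ..1, 2 * C * (K₀ * (1 - y)) ^ n / n.factorial
                = (2 * C * K₀ ^ n / n.factorial) * ∫ y in σ..1, (1 - y) ^ n := by
              rw [← intervalIntegral.integral_const_mul]
              congr 1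
              funext y
              rw [mul_pow]
              ring
            have e2 : ∫ y in σ..1, (1 - y) ^ n = (1 - σ) ^ (n + 1) / (n + 1) := by
              rw [intervalIntegral.integral_comp_sub_left (fun x => x ^ n) 1]
              simp [integral_pow]
            rw [e1, e2]
            have halg : ∀ x y : ℝ,
                x * (2 * C * x ^ n / n.factorial * (y ^ (n + 1) / ((n : ℝ) + 1)))
                  = 2 * C * (x * y) ^ (n + 1) / (n + 1).factorial := by
              intro x y
              have hne : (n.factorial : ℝ) ≠ 0 := Nat.cast_ne_zero.2 n.factorial_ne_zero
              have hne2 : ((n : ℝ) + 1) ≠ 0 := by positivity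
              rw [Nat.factorial_succ, mul_pow]
              push_cast
              field_simp
              ring
            exact halg K₀ (1 - σ)
  have hMzero : ∀ σ : ℝ, r₀ ≤ σ → σ ≤ 1 → M σ = 0 := by
    intro σ h1 h2
    have ht : Filter.Tendsto (fun n : ℕ => 2 * C * (K₀ * (1 - σ)) ^ n / n.factorial)
        Filter.atTop (nhds 0) := by
      have h := (FloorSemiring.tendsto_pow_div_factorial_atTop (K₀ * (1 - σ))).const_mul (2 * C)
      simpa [mul_div_assoc, mul_zero] using h
    have hle : M σ ≤ 0 :=
      ge_of_tendsto ht (Filter.Eventually.of_forall fun n => hiter n σ h1 h2)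
    linarith [hM0 σ]
  intro ρ τ h1 h2 h3
  have hle := hmemle τ ρ τ h1 h2 h3 le_rfl
  rw [hMzero τ (h1.trans h2) h3] at hle
  have : D ρ τ = 0 := abs_eq_zero.mp (le_antisymm hle (abs_nonneg _))
  simpa [hDdef, sub_eq_zero] using this

/-- Lemma 4.6 of the paper. Let `b ∈ (0,1)` and `f ∈ L¹(b,1)`. Two
measurable solutions of the integral equation on `{b < r ≤ s ≤ 1}` which are continuous
perturbations `f(r) + U₀(r,s)` of `f` with `U₀(·,1) = 0` coincide: for every `s ∈ (b,1]`,
`U(r,s) = Ũ(r,s)` for a.e. `r ∈ (b,s)`. -/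
theorem statement11 (b : ℝ) (hb : b ∈ Set.Ioo (0:ℝ) 1) (f : ℝ → ℝ)
    (hf : IntegrableOn f (Set.Ioo b 1))
    (U U' : ℝ → ℝ → ℝ)
    (hUm : Measurable ((triangleU b).indicator (Function.uncurry fun r s => U r s)))
    (hU'm : Measurable ((triangleU b).indicator (Function.uncurry fun r s => U' r s)))
    (hUint : UEqnIntegrable b U) (hU'int : UEqnIntegrable b U')
    (hUeq : UEqnHolds b U) (hU'eq : UEqnHolds b U')
    (hUdec : UDecomp b f U) (hU'dec : UDecomp b f U') :
    ∀ s ∈ Set.Ioc b 1,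
      ∀ᵐ r ∂(volume.restrict (Set.Ioo b s)), U r s = U' r s := by
  obtain ⟨hb0, hb1⟩ := hb
  obtain ⟨V, hVc, hV1, hVeq⟩ := hUdec
  obtain ⟨W, hWc, hW1, hWeq⟩ := hU'dec
  have hF0 : IntegrableOn (fun x => |f x|) (Set.Ioo b 1) := hf.abs
  have hF : IntegrableOn (fun x => |f x|) (Set.Ioc b 1) :=
    hF0.congr_set_ae Ioo_ae_eq_Ioc.symm
  intro s hs
  filter_upwards [ae_restrict_mem measurableSet_Ioo] with r hr
  have hkey := stmt11_core b hb0 f hF U U' hUint hU'int hUeq hU'eq V W hVc hWc hV1 hW1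
    hVeq hWeq r hr.1 (hr.2.le.trans hs.2) r s le_rfl hr.2.le hs.2
  rw [hVeq r s hr.1 hr.2.le hs.2, hWeq r s hr.1 hr.2.le hs.2, hkey]
end
end

section
/- Let Q ∈ L¹((0,∞);ℝ) and let A be a measurable real-valued function on (0,∞) such that |A(t) - Q(t)| ≤ ( ∫₀^t |Q(s)| ds )² · exp( t · ∫₀^t |Q(s)| ds ) for a.e. t > 0. Then for every M > 0 with M ≥ 2 ‖Q‖_{L¹(0,∞)}, one has ∫₀^∞ |A(t)| e^{-Mt} dt ≤ M. -/
open MeasureTheory Real Set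
open scoped ENNReal

noncomputable section

/-- Lemma 5.2(i) of the paper. Let `Q ∈ L¹((0,∞);ℝ)` and let `A` be a
measurable real-valued function on `(0,∞)` with
`|A(t) - Q(t)| ≤ (∫₀^t |Q|)² exp(t ∫₀^t |Q|)` for a.e. `t > 0`. Then for every `M > 0` with
`M ≥ 2‖Q‖_{L¹(0,∞)}` one has `∫₀^∞ |A(t)| e^{-Mt} dt ≤ M`. -/
theorem statement14 (Q A : ℝ → ℝ)
    (hQ : IntegrableOn Q (Set.Ioi 0))
    (hA : Measurable A)
    (hbound : ∀ᵐ t ∂(volume.restrict (Set.Ioi (0:ℝ))),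
      |A t - Q t| ≤ (∫ s in (0:ℝ)..t, |Q s|) ^ 2 *
        Real.exp (t * ∫ s in (0:ℝ)..t, |Q s|))
    (M : ℝ) (hM : 0 < M)
    (hMQ : 2 * ∫ t in Set.Ioi (0:ℝ), |Q t| ≤ M) :
    (∫⁻ t in Set.Ioi (0:ℝ), ENNReal.ofReal (|A t| * Real.exp (-M * t)))
      ≤ ENNReal.ofReal M := by
  set q : ℝ := ∫ t in Set.Ioi (0:ℝ), |Q t| with hq
  have hQabs : IntegrableOn (fun t => |Q t|) (Set.Ioi 0) := hQ.abs
  have hq0 : 0 ≤ q := integral_nonneg fun t => abs_nonneg _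
  have hqM : q ≤ M / 2 := by linarith
  have hb : (0:ℝ) < M - q := by linarith
  -- the interval integral is between 0 and q for t > 0
  have hF : ∀ t : ℝ, 0 < t → 0 ≤ (∫ s in (0:ℝ)..t, |Q s|) ∧
      (∫ s in (0:ℝ)..t, |Q s|) ≤ q := by
    intro t ht
    rw [intervalIntegral.integral_of_le ht.le]
    constructor
    · exact setIntegral_nonneg measurableSet_Ioc fun s _ => abs_nonneg _
    · apply setIntegral_mono_set hQabs
      · exact ae_of_all _ fun s => abs_nonneg _
      · exact HasSubset.Subset.eventuallyLE Ioc_subset_Ioi_self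
  -- pointwise bound
  have hpt : ∀ᵐ t ∂(volume.restrict (Set.Ioi (0:ℝ))),
      ENNReal.ofReal (|A t| * Real.exp (-M * t)) ≤
        ENNReal.ofReal (|Q t| * Real.exp (-M * t)) +
        ENNReal.ofReal (q ^ 2 * Real.exp (-(M - q) * t)) := by
    filter_upwards [hbound, ae_restrict_mem measurableSet_Ioi] with t hbt ht
    have ht : (0:ℝ) < t := ht
    obtain ⟨hF0, hFq⟩ := hF t ht
    have h1 : |A t| ≤ |Q t| + q ^ 2 * Real.exp (t * q) := by
      have htri : |A t| ≤ |Q t| + |A t - Q t| := by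
        have := abs_add_le (Q t) (A t - Q t)
        simpa using this
      have hstep : (∫ s in (0:ℝ)..t, |Q s|) ^ 2 *
          Real.exp (t * ∫ s in (0:ℝ)..t, |Q s|) ≤ q ^ 2 * Real.exp (t * q) := by
        have he : Real.exp (t * ∫ s in (0:ℝ)..t, |Q s|) ≤ Real.exp (t * q) :=
          Real.exp_le_exp.mpr (mul_le_mul_of_nonneg_left hFq ht.le)
        have hsq : (∫ s in (0:ℝ)..t, |Q s|) ^ 2 ≤ q ^ 2 := by nlinarith
        exact mul_le_mul hsq he (Real.exp_nonneg _) (sq_nonneg q)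
      linarith
    have h2 : |A t| * Real.exp (-M * t) ≤
        |Q t| * Real.exp (-M * t) + q ^ 2 * Real.exp (-(M - q) * t) := by
      have := mul_le_mul_of_nonneg_right h1 (Real.exp_nonneg (-M * t))
      calc |A t| * Real.exp (-M * t)
          ≤ (|Q t| + q ^ 2 * Real.exp (t * q)) * Real.exp (-M * t) := this
        _ = |Q t| * Real.exp (-M * t) + q ^ 2 * Real.exp (-(M - q) * t) := by
            rw [add_mul, mul_assoc, ← Real.exp_add]
            ring_nf
    have hnn : 0 ≤ |Q t| * Real.exp (-M * t) :=
      mul_nonneg (abs_nonneg _) (Real.exp_nonneg _)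
    calc ENNReal.ofReal (|A t| * Real.exp (-M * t))
        ≤ ENNReal.ofReal (|Q t| * Real.exp (-M * t) + q ^ 2 * Real.exp (-(M - q) * t)) :=
          ENNReal.ofReal_le_ofReal h2
      _ = _ := ENNReal.ofReal_add hnn (mul_nonneg (sq_nonneg _) (Real.exp_nonneg _))
  have step1 : (∫⁻ t in Set.Ioi (0:ℝ), ENNReal.ofReal (|A t| * Real.exp (-M * t)))
      ≤ (∫⁻ t in Set.Ioi (0:ℝ), ENNReal.ofReal (|Q t| * Real.exp (-M * t)))
      + (∫⁻ t in Set.Ioi (0:ℝ), ENNReal.ofReal (q ^ 2 * Real.exp (-(M - q) * t))) := by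
    refine (lintegral_mono_ae hpt).trans ?_
    refine (lintegral_add_right _ ?_).le
    fun_prop
  -- first term ≤ ofReal q
  have stepQ : (∫⁻ t in Set.Ioi (0:ℝ), ENNReal.ofReal (|Q t| * Real.exp (-M * t)))
      ≤ ENNReal.ofReal q := by
    have h1 : (∫⁻ t in Set.Ioi (0:ℝ), ENNReal.ofReal (|Q t| * Real.exp (-M * t)))
        ≤ ∫⁻ t in Set.Ioi (0:ℝ), ENNReal.ofReal (|Q t|) := by
      refine lintegral_mono_ae ?_
      filter_upwards [ae_restrict_mem measurableSet_Ioi] with t ht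
      refine ENNReal.ofReal_le_ofReal ?_
      have : Real.exp (-M * t) ≤ 1 := by
        rw [Real.exp_le_one_iff]
        nlinarith [mem_Ioi.mp ht]
      exact mul_le_of_le_one_right (abs_nonneg _) this
    have h2 : (∫⁻ t in Set.Ioi (0:ℝ), ENNReal.ofReal (|Q t|)) = ENNReal.ofReal q := by
      rw [hq, ← ofReal_integral_eq_lintegral_ofReal hQabs
        (ae_of_all _ fun t => abs_nonneg _)]
    exact h1.trans h2.le
  -- second term
  have hexpint : IntegrableOn (fun t => Real.exp (-(M - q) * t)) (Set.Ioi 0) := by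
    simpa using exp_neg_integrableOn_Ioi 0 hb
  have hexpval : (∫ t in Set.Ioi (0:ℝ), Real.exp (-(M - q) * t)) = (M - q)⁻¹ := by
    have := integral_comp_mul_left_Ioi (fun x => Real.exp (-x)) 0 hb
    simp only [mul_zero, smul_eq_mul, neg_mul] at this ⊢
    rw [this, integral_exp_neg_Ioi_zero, mul_one]
  have stepE : (∫⁻ t in Set.Ioi (0:ℝ), ENNReal.ofReal (q ^ 2 * Real.exp (-(M - q) * t)))
      = ENNReal.ofReal (q ^ 2 * (M - q)⁻¹) := by
    rw [← ofReal_integral_eq_lintegral_ofReal (hexpint.const_mul _)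
      (ae_of_all _ fun t => mul_nonneg (sq_nonneg _) (Real.exp_nonneg _)),
      MeasureTheory.integral_const_mul, hexpval]
  -- combine
  refine step1.trans ((add_le_add stepQ stepE.le).trans ?_)
  rw [← ENNReal.ofReal_add hq0 (mul_nonneg (sq_nonneg _) (inv_nonneg.mpr hb.le))]
  refine ENNReal.ofReal_le_ofReal ?_
  have hr : (M - q) * (M - q)⁻¹ = 1 := mul_inv_cancel₀ hb.ne'
  nlinarith [mul_nonneg hq0 (inv_nonneg.mpr hb.le), sq_nonneg q]
end
end

section
/- Let 0 < a < ∞ and M > 0. Let K₁, K₂ be measurable real-valued functions on {(t,s) : 0 ≤ s ≤ t ≤ a} each satisfying the integral equation K_j(t,s₂) = K_j(t,s₁) + ∫_{s₁}^{s₂} ∫_{y₂}^{t} K_j(y₁,y₂) K_j(t - y₁ + y₂, y₂) dy₁ dy₂ for all 0 < s₁ < s₂ < t < a (j = 1,2). Define g(s) := ∫_s^a |K₁(t,s) - K₂(t,s)| e^{-Mt} dt and D := sup_{0 ≤ s < a} e^{Ms} ∫_s^a ( |K₁(t,s)| + |K₂(t,s)| ) e^{-Mt} dt. If g is continuous on [0,a]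 and D < ∞, then g(s) ≤ g(0) · e^{Ds} for all s ∈ [0,a]. -/
open MeasureTheory Real Set
open scoped ENNReal

noncomputable section

/-- `g(s) = ∫_s^a |K₁(t,s) - K₂(t,s)| e^{-Mt} dt`. -/
def gFun (a M : ℝ) (K₁ K₂ : ℝ → ℝ → ℝ) (s : ℝ) : ℝ :=
  ∫ t in Set.Ioc s a, |K₁ t s - K₂ t s| * Real.exp (-M * t)

/-- `D = sup_{0 ≤ s < a} e^{Ms} ∫_s^a (|K₁(t,s)| + |K₂(t,s)|) e^{-Mt} dt`, as an extended
real number. -/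
def DConst (a M : ℝ) (K₁ K₂ : ℝ → ℝ → ℝ) : ℝ≥0∞ :=
  ⨆ s : {s : ℝ // 0 ≤ s ∧ s < a},
    ENNReal.ofReal (Real.exp (M * s.1)) *
      ∫⁻ t in Set.Ioc s.1 a, ENNReal.ofReal ((|K₁ t s.1| + |K₂ t s.1|) * Real.exp (-M * t))

namespace Statement15Aux

def Ew (M t : ℝ) : ℝ≥0∞ := ENNReal.ofReal (Real.exp (-M * t))

lemma Ew_ne_top {M t : ℝ} : Ew M t ≠ ⊤ := ENNReal.ofReal_ne_top

lemma measurable_Ew {M : ℝ} : Measurable fun t => Ew M t :=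
  (Real.continuous_exp.measurable.comp (measurable_const.mul measurable_id)).ennreal_ofReal

lemma Ew_split (M t y₁ y₂ : ℝ) :
    Ew M t = Ew M y₁ * Ew M (t - y₁ + y₂) * ENNReal.ofReal (Real.exp (M * y₂)) := by
  unfold Ew
  rw [← ENNReal.ofReal_mul (exp_nonneg _), ← Real.exp_add,
      ← ENNReal.ofReal_mul (exp_nonneg _), ← Real.exp_add]
  ring_nf

def Gw (a M : ℝ) (Δ : ℝ × ℝ → ℝ) (s : ℝ) : ℝ≥0∞ :=
  ∫⁻ t in Set.Ioc s a, Ew M t * ENNReal.ofReal (Δ (t, s))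

lemma setLIntegral_swap {S T : Set ℝ} {f : ℝ → ℝ → ℝ≥0∞}
    (hf : Measurable (Function.uncurry f)) :
    ∫⁻ x in S, ∫⁻ y in T, f x y = ∫⁻ y in T, ∫⁻ x in S, f x y :=
  lintegral_lintegral_swap hf.aemeasurable

lemma lintegral_shift_le {y₁ y₂ aa : ℝ} (h : y₂ ≤ y₁) (φ : ℝ → ℝ≥0∞) :
    ∫⁻ t in Set.Icc y₁ aa, φ (t - y₁ + y₂) ≤ ∫⁻ u in Set.Ioc y₂ aa, φ u := by
  have h1 : ∀ t : ℝ, t - y₁ + y₂ = t + (y₂ - y₁) := fun t => by ring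
  simp_rw [h1]
  have hmp : MeasurePreserving (fun t : ℝ => t + (y₂ - y₁)) volume volume :=
    measurePreserving_add_right volume (y₂ - y₁)
  have hemb : MeasurableEmbedding (fun t : ℝ => t + (y₂ - y₁)) :=
    measurableEmbedding_addRight (y₂ - y₁)
  have hpre : (fun t : ℝ => t + (y₂ - y₁)) ⁻¹' Set.Icc y₂ (aa + (y₂ - y₁)) = Set.Icc y₁ aa := by
    ext t
    simp only [Set.mem_preimage, Set.mem_Icc]
    constructor <;> rintro ⟨h1, h2⟩ <;> constructor <;> linarith
  calc ∫⁻ t in Set.Icc y₁ aa, φ (t + (y₂ - y₁))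
      = ∫⁻ u in Set.Icc y₂ (aa + (y₂ - y₁)), φ u := by
        rw [← hpre]; exact hmp.setLIntegral_comp_preimage_emb hemb φ _
    _ ≤ ∫⁻ u in Set.Icc y₂ aa, φ u :=
        lintegral_mono_set (Set.Icc_subset_Icc_right (by linarith))
    _ = ∫⁻ u in Set.Ioc y₂ aa, φ u := (setLIntegral_congr Ioc_ae_eq_Icc).symm

section Tbound

variable {a M s₁ s₂ : ℝ} {Δ A₁ A₂ : ℝ × ℝ → ℝ}

lemma Tbound
    (hΔ : Measurable Δ) (hA₁ : Measurable A₁) (hA₂ : Measurable A₂) :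
    (∫⁻ t in Set.Ioo s₂ a, ∫⁻ y₂ in Set.Ioc s₁ s₂, ∫⁻ y₁ in Set.Ioc y₂ t,
        Ew M t * (ENNReal.ofReal (Δ (y₁, y₂)) * ENNReal.ofReal (A₁ (t - y₁ + y₂, y₂)) +
          ENNReal.ofReal (A₂ (y₁, y₂)) * ENNReal.ofReal (Δ (t - y₁ + y₂, y₂))))
      ≤ ∫⁻ y₂ in Set.Ioc s₁ s₂,
          Gw a M Δ y₂ *
            (ENNReal.ofReal (Real.exp (M * y₂)) * (Gw a M A₁ y₂ + Gw a M A₂ y₂)) := by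
  set Ψ : ℝ → ℝ → ℝ → ℝ≥0∞ := fun t y₂ y₁ =>
    Ew M t * (ENNReal.ofReal (Δ (y₁, y₂)) * ENNReal.ofReal (A₁ (t - y₁ + y₂, y₂)) +
      ENNReal.ofReal (A₂ (y₁, y₂)) * ENNReal.ofReal (Δ (t - y₁ + y₂, y₂))) with hΨdef
  have measΨ : Measurable fun q : (ℝ × ℝ) × ℝ => Ψ q.1.1 q.1.2 q.2 := by
    simp only [hΨdef]
    apply Measurable.fun_mul
    · exact measurable_Ew.comp measurable_fst.fst
    apply Measurable.fun_add
    · exact ((hΔ.comp (measurable_snd.prodMk measurable_fst.snd)).ennreal_ofReal).mul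
        ((hA₁.comp ((((measurable_fst.fst.sub measurable_snd).add
          measurable_fst.snd)).prodMk measurable_fst.snd)).ennreal_ofReal)
    · exact ((hA₂.comp (measurable_snd.prodMk measurable_fst.snd)).ennreal_ofReal).mul
        ((hΔ.comp ((((measurable_fst.fst.sub measurable_snd).add
          measurable_fst.snd)).prodMk measurable_fst.snd)).ennreal_ofReal)
  -- outer swap
  have hmeasInner : Measurable (Function.uncurry fun t y₂ => ∫⁻ y₁ in Set.Ioc y₂ t, Ψ t y₂ y₁) := by
    have hset : MeasurableSet {q : (ℝ × ℝ) × ℝ | q.1.2 < q.2 ∧ q.2 ≤ q.1.1} :=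
      (measurableSet_lt measurable_fst.snd measurable_snd).inter
        (measurableSet_le measurable_snd measurable_fst.fst)
    have heq : (Function.uncurry fun t y₂ => ∫⁻ y₁ in Set.Ioc y₂ t, Ψ t y₂ y₁) =
        fun p : ℝ × ℝ => ∫⁻ y₁,
          ({q : (ℝ × ℝ) × ℝ | q.1.2 < q.2 ∧ q.2 ≤ q.1.1}).indicator
            (fun q => Ψ q.1.1 q.1.2 q.2) (p, y₁) := by
      funext p
      show (∫⁻ y₁ in Set.Ioc p.2 p.1, Ψ p.1 p.2 y₁) = _
      rw [← lintegral_indicator measurableSet_Ioc]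
      exact lintegral_congr fun y₁ => by
        simp only [Set.indicator_apply, Set.mem_Ioc, Set.mem_setOf_eq]
    rw [heq]
    exact (measΨ.indicator hset).lintegral_prod_right'
  rw [setLIntegral_swap hmeasInner]
  refine lintegral_mono fun y₂ => ?_
  -- now fix y₂
  set C : ℝ≥0∞ := ENNReal.ofReal (Real.exp (M * y₂)) with hC
  set F : ℝ → ℝ → ℝ≥0∞ := fun t y₁ => (Set.Ici y₁).indicator (fun t' => Ψ t' y₂ y₁) t with hF
  have measF : Measurable (Function.uncurry F) := by
    have : Function.uncurry F =
        ({p : ℝ × ℝ | p.2 ≤ p.1}).indicator (fun p => Ψ p.1 y₂ p.2) := by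
      funext p
      show (Set.Ici p.2).indicator (fun t' => Ψ t' y₂ p.2) p.1 = _
      simp only [Set.indicator_apply, Set.mem_Ici, Set.mem_setOf_eq]
    rw [this]
    exact (measΨ.comp ((measurable_fst.prodMk measurable_const).prodMk
      measurable_snd)).indicator (measurableSet_le measurable_snd measurable_fst)
  calc ∫⁻ t in Set.Ioo s₂ a, ∫⁻ y₁ in Set.Ioc y₂ t, Ψ t y₂ y₁
      ≤ ∫⁻ t in Set.Ioo s₂ a, ∫⁻ y₁ in Set.Ioc y₂ a, F t y₁ := by
        refine lintegral_mono_ae (((ae_restrict_mem measurableSet_Ioo)).mono fun t ht => ?_)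
        calc ∫⁻ y₁ in Set.Ioc y₂ t, Ψ t y₂ y₁
            = ∫⁻ y₁ in Set.Ioc y₂ t, F t y₁ := by
              refine setLIntegral_congr_fun measurableSet_Ioc (fun y₁ hy₁ => ?_)
              exact (Set.indicator_of_mem (Set.mem_Ici.mpr hy₁.2)
                fun t' => Ψ t' y₂ y₁).symm
          _ ≤ ∫⁻ y₁ in Set.Ioc y₂ a, F t y₁ :=
              lintegral_mono_set (Set.Ioc_subset_Ioc_right ht.2.le)
    _ = ∫⁻ y₁ in Set.Ioc y₂ a, ∫⁻ t in Set.Ioo s₂ a, F t y₁ := setLIntegral_swap measF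
    _ ≤ ∫⁻ y₁ in Set.Ioc y₂ a,
          ((Ew M y₁ * ENNReal.ofReal (Δ (y₁, y₂)) * C) * Gw a M A₁ y₂ +
           (Ew M y₁ * ENNReal.ofReal (A₂ (y₁, y₂)) * C) * Gw a M Δ y₂) := by
        refine lintegral_mono_ae (((ae_restrict_mem measurableSet_Ioc)).mono fun y₁ hy₁ => ?_)
        calc ∫⁻ t in Set.Ioo s₂ a, F t y₁
            = ∫⁻ t in Set.Ici y₁ ∩ Set.Ioo s₂ a, Ψ t y₂ y₁ :=
              setLIntegral_indicator measurableSet_Ici _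
          _ ≤ ∫⁻ t in Set.Icc y₁ a, Ψ t y₂ y₁ := by
              refine lintegral_mono_set fun t ht => ⟨ht.1, ht.2.2.le⟩
          _ ≤ (Ew M y₁ * ENNReal.ofReal (Δ (y₁, y₂)) * C) * Gw a M A₁ y₂ +
              (Ew M y₁ * ENNReal.ofReal (A₂ (y₁, y₂)) * C) * Gw a M Δ y₂ := by
              have hΨt : ∀ t, Ψ t y₂ y₁ =
                  (Ew M y₁ * ENNReal.ofReal (Δ (y₁, y₂)) * C) *
                    ((fun u => Ew M u * ENNReal.ofReal (A₁ (u, y₂))) (t - y₁ + y₂)) +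
                  (Ew M y₁ * ENNReal.ofReal (A₂ (y₁, y₂)) * C) *
                    ((fun u => Ew M u * ENNReal.ofReal (Δ (u, y₂))) (t - y₁ + y₂)) := by
                intro t
                rw [hΨdef]
                simp only []
                rw [Ew_split M t y₁ y₂, hC]
                ring
              simp_rw [hΨt]
              rw [lintegral_add_left]
              · rw [lintegral_const_mul' _ _
                  (ENNReal.mul_ne_top (ENNReal.mul_ne_top Ew_ne_top ENNReal.ofReal_ne_top)
                    ENNReal.ofReal_ne_top),
                  lintegral_const_mul' _ _
                  (ENNReal.mul_ne_top (ENNReal.mul_ne_top Ew_ne_top ENNReal.ofReal_ne_top)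
                    ENNReal.ofReal_ne_top)]
                exact add_le_add
                  (mul_le_mul_right (lintegral_shift_le hy₁.1.le _) _)
                  (mul_le_mul_right (lintegral_shift_le hy₁.1.le _) _)
              · exact (((ENNReal.continuous_ofReal.measurable.comp
                  ((continuous_exp.measurable.comp
                    (measurable_const.mul ((measurable_id.sub measurable_const).add
                      measurable_const))))).mul
                  ((hA₁.comp (((measurable_id.sub measurable_const).add
                    measurable_const).prodMk measurable_const)).ennreal_ofReal)).const_mul _)
    _ = Gw a M Δ y₂ * (C * (Gw a M A₁ y₂ + Gw a M A₂ y₂)) := by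
        have hq₁ : Measurable fun y₁ => Ew M y₁ * ENNReal.ofReal (Δ (y₁, y₂)) :=
          measurable_Ew.mul ((hΔ.comp (measurable_id.prodMk measurable_const)).ennreal_ofReal)
        have hq₂ : Measurable fun y₁ => Ew M y₁ * ENNReal.ofReal (A₂ (y₁, y₂)) :=
          measurable_Ew.mul ((hA₂.comp (measurable_id.prodMk measurable_const)).ennreal_ofReal)
        have harr : ∀ y₁ : ℝ,
            ((Ew M y₁ * ENNReal.ofReal (Δ (y₁, y₂)) * C) * Gw a M A₁ y₂ +
             (Ew M y₁ * ENNReal.ofReal (A₂ (y₁, y₂)) * C) * Gw a M Δ y₂) =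
            (Ew M y₁ * ENNReal.ofReal (Δ (y₁, y₂))) * (C * Gw a M A₁ y₂) +
            (Ew M y₁ * ENNReal.ofReal (A₂ (y₁, y₂))) * (C * Gw a M Δ y₂) := fun y₁ => by ring
        simp_rw [harr]
        rw [lintegral_add_left (hq₁.mul_const _)]
        rw [lintegral_mul_const'' _ hq₁.aemeasurable, lintegral_mul_const'' _ hq₂.aemeasurable]
        show Gw a M Δ y₂ * (C * Gw a M A₁ y₂) + Gw a M A₂ y₂ * (C * Gw a M Δ y₂) = _
        ring

end Tbound

section Star

variable {a M s₁ s₂ : ℝ} {K₁ K₂ : ℝ → ℝ → ℝ} {F₁ F₂ : ℝ × ℝ → ℝ} {D : ℝ≥0∞}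

lemma star
    (hm₁ : Measurable F₁) (hm₂ : Measurable F₂)
    (htri₁ : ∀ t s : ℝ, 0 ≤ s → s ≤ t → t ≤ a → F₁ (t, s) = K₁ t s)
    (htri₂ : ∀ t s : ℝ, 0 ≤ s → s ≤ t → t ≤ a → F₂ (t, s) = K₂ t s)
    (hK₁int : KEqnIntegrable a K₁) (hK₂int : KEqnIntegrable a K₂)
    (hK₁eq : KEqnHolds a K₁) (hK₂eq : KEqnHolds a K₂)
    (hDtop : D ≠ ⊤)
    (hDle : ∀ y : ℝ, 0 ≤ y → y < a →
      ENNReal.ofReal (Real.exp (M * y)) *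
        (Gw a M (fun p => |F₁ p|) y + Gw a M (fun p => |F₂ p|) y) ≤ D)
    (h01 : 0 < s₁) (h12 : s₁ < s₂) (h2a : s₂ < a) :
    Gw a M (fun p => |F₁ p - F₂ p|) s₂ ≤
      Gw a M (fun p => |F₁ p - F₂ p|) s₁ +
        D * ∫⁻ y in Set.Ioc s₁ s₂, Gw a M (fun p => |F₁ p - F₂ p|) y := by
  set Δ : ℝ × ℝ → ℝ := fun p => |F₁ p - F₂ p| with hΔdef
  set A₁ : ℝ × ℝ → ℝ := fun p => |F₁ p| with hA₁def
  set A₂ : ℝ × ℝ → ℝ := fun p => |F₂ p| with hA₂def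
  have hΔ : Measurable Δ := (hm₁.sub hm₂).abs
  have hA₁ : Measurable A₁ := hm₁.abs
  have hA₂ : Measurable A₂ := hm₂.abs
  set DD : ℝ → ℝ≥0∞ := fun t => ∫⁻ y₂ in Set.Ioc s₁ s₂, ∫⁻ y₁ in Set.Ioc y₂ t,
    (ENNReal.ofReal (Δ (y₁, y₂)) * ENNReal.ofReal (A₁ (t - y₁ + y₂, y₂)) +
      ENNReal.ofReal (A₂ (y₁, y₂)) * ENNReal.ofReal (Δ (t - y₁ + y₂, y₂))) with hDDdef
  -- pointwise estimate
  have stepPt : ∀ t ∈ Set.Ioo s₂ a,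
      Ew M t * ENNReal.ofReal (Δ (t, s₂)) ≤
        Ew M t * ENNReal.ofReal (Δ (t, s₁)) + Ew M t * DD t := by
    intro t ht
    have key : ENNReal.ofReal (Δ (t, s₂)) ≤ ENNReal.ofReal (Δ (t, s₁)) + DD t := by
      have hΔ2 : Δ (t, s₂) = |K₁ t s₂ - K₂ t s₂| := by
        show |F₁ (t, s₂) - F₂ (t, s₂)| = _
        rw [htri₁ t s₂ (h01.trans h12).le ht.1.le ht.2.le,
            htri₂ t s₂ (h01.trans h12).le ht.1.le ht.2.le]
      have hΔ1 : Δ (t, s₁) = |K₁ t s₁ - K₂ t s₁| := by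
        show |F₁ (t, s₁) - F₂ (t, s₁)| = _
        rw [htri₁ t s₁ h01.le (h12.trans ht.1).le ht.2.le,
            htri₂ t s₁ h01.le (h12.trans ht.1).le ht.2.le]
      obtain ⟨hin₁, hout₁⟩ := hK₁int s₁ s₂ t h01 h12 ht.1 ht.2
      obtain ⟨hin₂, hout₂⟩ := hK₂int s₁ s₂ t h01 h12 ht.1 ht.2
      have heq₁ := hK₁eq s₁ s₂ t h01 h12 ht.1 ht.2
      have heq₂ := hK₂eq s₁ s₂ t h01 h12 ht.1 ht.2
      set w₁ : ℝ → ℝ := fun y₂ => ∫ y₁ in y₂..t, K₁ y₁ y₂ * K₁ (t - y₁ + y₂) y₂ with hw₁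
      set w₂ : ℝ → ℝ := fun y₂ => ∫ y₁ in y₂..t, K₂ y₁ y₂ * K₂ (t - y₁ + y₂) y₂ with hw₂
      have hKd : K₁ t s₂ - K₂ t s₂ = (K₁ t s₁ - K₂ t s₁) +
          ((∫ y₂ in s₁..s₂, w₁ y₂) - (∫ y₂ in s₁..s₂, w₂ y₂)) := by
        rw [heq₁, heq₂]; ring
      have hJ : (‖(∫ y₂ in s₁..s₂, w₁ y₂) - (∫ y₂ in s₁..s₂, w₂ y₂)‖₊ : ℝ≥0∞) ≤ DD t := by
        have hsub : (∫ y₂ in s₁..s₂, w₁ y₂) - (∫ y₂ in s₁..s₂, w₂ y₂) =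
            ∫ y₂ in Set.Ioc s₁ s₂, (w₁ y₂ - w₂ y₂) := by
          rw [← intervalIntegral.integral_sub hout₁ hout₂,
              intervalIntegral.integral_of_le h12.le]
        rw [hsub]
        refine le_trans (enorm_integral_le_lintegral_enorm _) ?_
        refine lintegral_mono_ae (((ae_restrict_mem measurableSet_Ioc)).mono fun y₂ hy₂ => ?_)
        have hy₂t : y₂ ≤ t := hy₂.2.trans ht.1.le
        have hsub2 : w₁ y₂ - w₂ y₂ = ∫ y₁ in Set.Ioc y₂ t,
            (K₁ y₁ y₂ * K₁ (t - y₁ + y₂) y₂ - K₂ y₁ y₂ * K₂ (t - y₁ + y₂) y₂) := by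
          rw [hw₁, hw₂]
          rw [← intervalIntegral.integral_sub (hin₁ y₂ ⟨hy₂.1.le, hy₂.2⟩)
              (hin₂ y₂ ⟨hy₂.1.le, hy₂.2⟩), intervalIntegral.integral_of_le hy₂t]
        rw [hsub2]
        refine le_trans (enorm_integral_le_lintegral_enorm _) ?_
        refine lintegral_mono_ae (((ae_restrict_mem measurableSet_Ioc)).mono fun y₁ hy₁ => ?_)
        have h0y₂ : 0 ≤ y₂ := h01.le.trans hy₂.1.le
        have hy₁a : y₁ ≤ a := hy₁.2.trans ht.2.le
        have hu1 : y₂ ≤ t - y₁ + y₂ := by have := hy₁.2; linarith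
        have hu2 : t - y₁ + y₂ ≤ a := by have := hy₁.1; have := ht.2; linarith
        have e1 : Δ (y₁, y₂) = |K₁ y₁ y₂ - K₂ y₁ y₂| := by
          show |F₁ (y₁, y₂) - F₂ (y₁, y₂)| = _
          rw [htri₁ y₁ y₂ h0y₂ hy₁.1.le hy₁a, htri₂ y₁ y₂ h0y₂ hy₁.1.le hy₁a]
        have e2 : A₁ (t - y₁ + y₂, y₂) = |K₁ (t - y₁ + y₂) y₂| := by
          show |F₁ (t - y₁ + y₂, y₂)| = _
          rw [htri₁ _ y₂ h0y₂ hu1 hu2]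
        have e3 : A₂ (y₁, y₂) = |K₂ y₁ y₂| := by
          show |F₂ (y₁, y₂)| = _
          rw [htri₂ y₁ y₂ h0y₂ hy₁.1.le hy₁a]
        have e4 : Δ (t - y₁ + y₂, y₂) = |K₁ (t - y₁ + y₂) y₂ - K₂ (t - y₁ + y₂) y₂| := by
          show |F₁ (t - y₁ + y₂, y₂) - F₂ (t - y₁ + y₂, y₂)| = _
          rw [htri₁ _ y₂ h0y₂ hu1 hu2, htri₂ _ y₂ h0y₂ hu1 hu2]
        calc (‖K₁ y₁ y₂ * K₁ (t - y₁ + y₂) y₂ - K₂ y₁ y₂ * K₂ (t - y₁ + y₂) y₂‖₊ : ℝ≥0∞)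
            = ENNReal.ofReal |K₁ y₁ y₂ * K₁ (t - y₁ + y₂) y₂ -
                K₂ y₁ y₂ * K₂ (t - y₁ + y₂) y₂| := Real.enorm_eq_ofReal_abs _
          _ ≤ ENNReal.ofReal (|K₁ y₁ y₂ - K₂ y₁ y₂| * |K₁ (t - y₁ + y₂) y₂| +
                |K₂ y₁ y₂| * |K₁ (t - y₁ + y₂) y₂ - K₂ (t - y₁ + y₂) y₂|) := by
              refine ENNReal.ofReal_le_ofReal ?_
              have hd : K₁ y₁ y₂ * K₁ (t - y₁ + y₂) y₂ - K₂ y₁ y₂ * K₂ (t - y₁ + y₂) y₂ =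
                  (K₁ y₁ y₂ - K₂ y₁ y₂) * K₁ (t - y₁ + y₂) y₂ +
                  K₂ y₁ y₂ * (K₁ (t - y₁ + y₂) y₂ - K₂ (t - y₁ + y₂) y₂) := by ring
              rw [hd]
              refine (abs_add_le _ _).trans ?_
              rw [abs_mul, abs_mul]
          _ ≤ ENNReal.ofReal (|K₁ y₁ y₂ - K₂ y₁ y₂| * |K₁ (t - y₁ + y₂) y₂|) +
              ENNReal.ofReal (|K₂ y₁ y₂| * |K₁ (t - y₁ + y₂) y₂ - K₂ (t - y₁ + y₂) y₂|) :=
              ENNReal.ofReal_add_le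
          _ = ENNReal.ofReal (Δ (y₁, y₂)) * ENNReal.ofReal (A₁ (t - y₁ + y₂, y₂)) +
              ENNReal.ofReal (A₂ (y₁, y₂)) * ENNReal.ofReal (Δ (t - y₁ + y₂, y₂)) := by
              rw [ENNReal.ofReal_mul (abs_nonneg _), ENNReal.ofReal_mul (abs_nonneg _),
                e1, e2, e3, e4]
      calc ENNReal.ofReal (Δ (t, s₂)) = (‖K₁ t s₂ - K₂ t s₂‖₊ : ℝ≥0∞) := by
            rw [hΔ2, ← Real.enorm_eq_ofReal_abs, enorm_eq_nnnorm]
        _ ≤ (‖K₁ t s₁ - K₂ t s₁‖₊ : ℝ≥0∞) +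
            (‖(∫ y₂ in s₁..s₂, w₁ y₂) - (∫ y₂ in s₁..s₂, w₂ y₂)‖₊ : ℝ≥0∞) := by
            rw [hKd]
            exact_mod_cast nnnorm_add_le _ _
        _ ≤ ENNReal.ofReal (Δ (t, s₁)) + DD t := by
            refine add_le_add (le_of_eq ?_) hJ
            rw [hΔ1, ← Real.enorm_eq_ofReal_abs, enorm_eq_nnnorm]
    calc Ew M t * ENNReal.ofReal (Δ (t, s₂))
        ≤ Ew M t * (ENNReal.ofReal (Δ (t, s₁)) + DD t) := mul_le_mul_right key _
      _ = Ew M t * ENNReal.ofReal (Δ (t, s₁)) + Ew M t * DD t := mul_add _ _ _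
  -- assemble
  calc Gw a M Δ s₂
      = ∫⁻ t in Set.Ioo s₂ a, Ew M t * ENNReal.ofReal (Δ (t, s₂)) :=
        (setLIntegral_congr Ioo_ae_eq_Ioc).symm
    _ ≤ ∫⁻ t in Set.Ioo s₂ a,
          (Ew M t * ENNReal.ofReal (Δ (t, s₁)) + Ew M t * DD t) :=
        lintegral_mono_ae (((ae_restrict_mem measurableSet_Ioo)).mono stepPt)
    _ = (∫⁻ t in Set.Ioo s₂ a, Ew M t * ENNReal.ofReal (Δ (t, s₁))) +
        ∫⁻ t in Set.Ioo s₂ a, Ew M t * DD t := by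
        rw [lintegral_add_left]
        exact measurable_Ew.mul
          ((hΔ.comp (measurable_id.prodMk measurable_const)).ennreal_ofReal)
    _ ≤ Gw a M Δ s₁ + D * ∫⁻ y in Set.Ioc s₁ s₂, Gw a M Δ y := by
        refine add_le_add ?_ ?_
        · exact lintegral_mono_set fun t ht => ⟨h12.trans ht.1, ht.2.le⟩
        · have hpush : ∫⁻ t in Set.Ioo s₂ a, Ew M t * DD t =
              ∫⁻ t in Set.Ioo s₂ a, ∫⁻ y₂ in Set.Ioc s₁ s₂, ∫⁻ y₁ in Set.Ioc y₂ t,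
                Ew M t * (ENNReal.ofReal (Δ (y₁, y₂)) * ENNReal.ofReal (A₁ (t - y₁ + y₂, y₂)) +
                  ENNReal.ofReal (A₂ (y₁, y₂)) * ENNReal.ofReal (Δ (t - y₁ + y₂, y₂))) := by
            refine lintegral_congr fun t => ?_
            rw [hDDdef]
            rw [← lintegral_const_mul' _ _ (Ew_ne_top (M := M) (t := t))]
            exact lintegral_congr fun y₂ =>
              (lintegral_const_mul' _ _ (Ew_ne_top (M := M) (t := t))).symm
          rw [hpush]
          refine le_trans (Tbound hΔ hA₁ hA₂) ?_
          calc ∫⁻ y₂ in Set.Ioc s₁ s₂, Gw a M Δ y₂ *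
                (ENNReal.ofReal (Real.exp (M * y₂)) * (Gw a M A₁ y₂ + Gw a M A₂ y₂))
              ≤ ∫⁻ y₂ in Set.Ioc s₁ s₂, Gw a M Δ y₂ * D := by
                refine lintegral_mono_ae (((ae_restrict_mem measurableSet_Ioc)).mono
                  fun y₂ hy₂ => ?_)
                exact mul_le_mul_right
                  (hDle y₂ (h01.le.trans hy₂.1.le) (lt_of_le_of_lt hy₂.2 h2a)) _
            _ = D * ∫⁻ y in Set.Ioc s₁ s₂, Gw a M Δ y := by
                rw [lintegral_mul_const' _ _ hDtop, mul_comm]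

end Star
end Statement15Aux

/-- the Grönwall-type estimate in Lemma 5.3 of the paper. Let
`0 < a < ∞` and `M > 0`, and let `K₁, K₂` be measurable solutions of the integral equation
on `{0 ≤ s ≤ t ≤ a}`. If `g` is continuous on `[0,a]` and `D < ∞`, then
`g(s) ≤ g(0) e^{Ds}` for all `s ∈ [0,a]`. -/
theorem statement15 (a M : ℝ) (ha : 0 < a) (hM : 0 < M)
    (K₁ K₂ : ℝ → ℝ → ℝ)
    (hK₁m : Measurable ((triangleK a).indicator (Function.uncurry fun t s => K₁ t s)))
    (hK₂m : Measurable ((triangleK a).indicator (Function.uncurry fun t s => K₂ t s)))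
    (hK₁int : KEqnIntegrable a K₁) (hK₂int : KEqnIntegrable a K₂)
    (hK₁eq : KEqnHolds a K₁) (hK₂eq : KEqnHolds a K₂)
    (hg : ContinuousOn (gFun a M K₁ K₂) (Set.Icc 0 a))
    (hD : DConst a M K₁ K₂ < ⊤) :
    ∀ s ∈ Set.Icc (0:ℝ) a,
      gFun a M K₁ K₂ s ≤ gFun a M K₁ K₂ 0 * Real.exp ((DConst a M K₁ K₂).toReal * s) := by
  classical
  intro s hs
  set F₁ : ℝ × ℝ → ℝ := (triangleK a).indicator (Function.uncurry fun t s => K₁ t s) with hF₁def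
  set F₂ : ℝ × ℝ → ℝ := (triangleK a).indicator (Function.uncurry fun t s => K₂ t s) with hF₂def
  set Δ : ℝ × ℝ → ℝ := fun p => |F₁ p - F₂ p| with hΔdef
  set A₁ : ℝ × ℝ → ℝ := fun p => |F₁ p| with hA₁def
  set A₂ : ℝ × ℝ → ℝ := fun p => |F₂ p| with hA₂def
  set D : ℝ≥0∞ := DConst a M K₁ K₂ with hDdef
  set D' : ℝ := D.toReal with hD'def
  set g : ℝ → ℝ := gFun a M K₁ K₂ with hgdef
  have hΔm : Measurable Δ := (hK₁m.sub hK₂m).abs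
  have htri₁ : ∀ t s : ℝ, 0 ≤ s → s ≤ t → t ≤ a → F₁ (t, s) = K₁ t s := by
    intro t s h1 h2 h3
    have hmem : (t, s) ∈ triangleK a := ⟨h1, h2, h3⟩
    rw [hF₁def, Set.indicator_of_mem hmem]
    rfl
  have htri₂ : ∀ t s : ℝ, 0 ≤ s → s ≤ t → t ≤ a → F₂ (t, s) = K₂ t s := by
    intro t s h1 h2 h3
    have hmem : (t, s) ∈ triangleK a := ⟨h1, h2, h3⟩
    rw [hF₂def, Set.indicator_of_mem hmem]
    rfl
  have hg0 : ∀ y : ℝ, 0 ≤ g y := by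
    intro y
    exact MeasureTheory.integral_nonneg fun t => mul_nonneg (abs_nonneg _) (Real.exp_pos _).le
  -- the D constant dominates
  have hDle : ∀ y : ℝ, 0 ≤ y → y < a →
      ENNReal.ofReal (Real.exp (M * y)) *
        (Statement15Aux.Gw a M A₁ y + Statement15Aux.Gw a M A₂ y) ≤ D := by
    intro y hy0 hya
    have hsum : Statement15Aux.Gw a M A₁ y + Statement15Aux.Gw a M A₂ y =
        ∫⁻ t in Set.Ioc y a, ENNReal.ofReal ((|K₁ t y| + |K₂ t y|) * Real.exp (-M * t)) := by
      unfold Statement15Aux.Gw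
      have hmA₁ : Measurable fun t : ℝ =>
          Statement15Aux.Ew M t * ENNReal.ofReal (A₁ (t, y)) :=
        Statement15Aux.measurable_Ew.mul
          ((hK₁m.abs.comp (measurable_id.prodMk measurable_const)).ennreal_ofReal)
      rw [← lintegral_add_left hmA₁]
      refine setLIntegral_congr_fun measurableSet_Ioc (
        fun t ht => ?_)
      have e1 : A₁ (t, y) = |K₁ t y| := by
        show |F₁ (t, y)| = _; rw [htri₁ t y hy0 ht.1.le ht.2]
      have e2 : A₂ (t, y) = |K₂ t y| := by
        show |F₂ (t, y)| = _; rw [htri₂ t y hy0 ht.1.le ht.2]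
      rw [e1, e2, ENNReal.ofReal_mul (add_nonneg (abs_nonneg _) (abs_nonneg _)),
        ENNReal.ofReal_add (abs_nonneg _) (abs_nonneg _)]
      unfold Statement15Aux.Ew
      ring
    rw [hsum, hDdef]
    exact le_iSup_of_le ⟨y, hy0, hya⟩ le_rfl
  have hGfin : ∀ s : ℝ, 0 ≤ s → s ≤ a → Statement15Aux.Gw a M Δ s ≠ ⊤ := by
    intro s hs0 hsa
    rcases eq_or_lt_of_le hsa with heq | hlt
    · rw [heq]
      unfold Statement15Aux.Gw
      simp
    · have h1 : Statement15Aux.Gw a M Δ s ≤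
          Statement15Aux.Gw a M A₁ s + Statement15Aux.Gw a M A₂ s := by
        unfold Statement15Aux.Gw
        have hmA₁ : Measurable fun t : ℝ =>
            Statement15Aux.Ew M t * ENNReal.ofReal (A₁ (t, s)) :=
          Statement15Aux.measurable_Ew.mul
            ((hK₁m.abs.comp (measurable_id.prodMk measurable_const)).ennreal_ofReal)
        rw [← lintegral_add_left hmA₁]
        refine lintegral_mono fun t => ?_
        rw [← mul_add]
        refine mul_le_mul_right ?_ _
        refine le_trans (ENNReal.ofReal_le_ofReal ?_) ENNReal.ofReal_add_le
        show |F₁ (t, s) - F₂ (t, s)| ≤ |F₁ (t, s)| + |F₂ (t, s)|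
        exact (abs_sub _ _)
      have h2 : Statement15Aux.Gw a M A₁ s + Statement15Aux.Gw a M A₂ s ≠ ⊤ := by
        intro htop
        have hle := hDle s hs0 hlt
        rw [htop, ENNReal.mul_top (by
          simpa [ENNReal.ofReal_eq_zero, not_le] using Real.exp_pos (M * s))] at hle
        exact hD.ne (top_le_iff.mp hle)
      exact ne_top_of_le_ne_top h2 h1
  have hgG : ∀ s : ℝ, 0 ≤ s → s ≤ a → g s = (Statement15Aux.Gw a M Δ s).toReal := by
    intro s hs0 hsa
    have hmint : Measurable fun t => Δ (t, s) * Real.exp (-M * t) :=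
      (hΔm.comp (measurable_id.prodMk measurable_const)).mul
        (Real.continuous_exp.measurable.comp (measurable_const.mul measurable_id))
    have haesm : AEStronglyMeasurable (fun t => |K₁ t s - K₂ t s| * Real.exp (-M * t))
        (volume.restrict (Set.Ioc s a)) := by
      refine hmint.aestronglyMeasurable.congr ?_
      refine ((ae_restrict_mem measurableSet_Ioc).mono fun t ht => ?_)
      show Δ (t, s) * Real.exp (-M * t) = |K₁ t s - K₂ t s| * Real.exp (-M * t)
      have : Δ (t, s) = |K₁ t s - K₂ t s| := by
        show |F₁ (t, s) - F₂ (t, s)| = _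
        rw [htri₁ t s hs0 ht.1.le ht.2, htri₂ t s hs0 ht.1.le ht.2]
      rw [this]
    have hnn : 0 ≤ᵐ[volume.restrict (Set.Ioc s a)]
        fun t => |K₁ t s - K₂ t s| * Real.exp (-M * t) :=
      Filter.Eventually.of_forall fun t => mul_nonneg (abs_nonneg _) (Real.exp_pos _).le
    rw [hgdef]
    unfold gFun
    rw [MeasureTheory.integral_eq_lintegral_of_nonneg_ae hnn haesm]
    congr 1
    refine setLIntegral_congr_fun measurableSet_Ioc (
      fun t ht => ?_)
    have hΔe : Δ (t, s) = |K₁ t s - K₂ t s| := by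
      show |F₁ (t, s) - F₂ (t, s)| = _
      rw [htri₁ t s hs0 ht.1.le ht.2, htri₂ t s hs0 ht.1.le ht.2]
    rw [ENNReal.ofReal_mul (abs_nonneg _), ← hΔe]
    unfold Statement15Aux.Ew
    ring
  have hOR : ∀ s : ℝ, 0 ≤ s → s ≤ a →
      ENNReal.ofReal (g s) = Statement15Aux.Gw a M Δ s := by
    intro s hs0 hsa
    rw [hgG s hs0 hsa]
    exact ENNReal.ofReal_toReal (hGfin s hs0 hsa)
  have hIa : IntervalIntegrable g volume 0 a := by
    rw [intervalIntegrable_iff_integrableOn_Ioc_of_le ha.le]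
    exact (hg.integrableOn_Icc).mono_set Set.Ioc_subset_Icc_self
  -- the real Gronwall-type integral inequality on the open interval
  have hstarR : ∀ s₁ s₂ : ℝ, 0 < s₁ → s₁ < s₂ → s₂ < a →
      g s₂ ≤ g s₁ + D' * ∫ y in s₁..s₂, g y := by
    intro s₁ s₂ h01 h12 h2a
    have key := Statement15Aux.star hK₁m hK₂m htri₁ htri₂ hK₁int hK₂int hK₁eq hK₂eq
      hD.ne hDle h01 h12 h2a
    have hint : IntegrableOn g (Set.Ioc s₁ s₂) volume := by
      refine ((hg.mono ?_).integrableOn_Icc).mono_set Set.Ioc_subset_Icc_self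
      exact Set.Icc_subset_Icc h01.le h2a.le
    have hI0 : 0 ≤ ∫ y in s₁..s₂, g y :=
      intervalIntegral.integral_nonneg h12.le fun y _ => hg0 y
    have hL : (∫⁻ y in Set.Ioc s₁ s₂, Statement15Aux.Gw a M Δ y) =
        ENNReal.ofReal (∫ y in s₁..s₂, g y) := by
      rw [intervalIntegral.integral_of_le h12.le]
      rw [MeasureTheory.ofReal_integral_eq_lintegral_ofReal hint
        (Filter.Eventually.of_forall fun y => hg0 y)]
      refine setLIntegral_congr_fun measurableSet_Ioc (
        fun y hy => ?_)
      exact (hOR y (h01.le.trans hy.1.le) (hy.2.trans h2a.le)).symm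
    rw [hL] at key
    have k2 : ENNReal.ofReal (g s₂) ≤
        ENNReal.ofReal (g s₁ + D' * ∫ y in s₁..s₂, g y) := by
      have hrw : ENNReal.ofReal (g s₁ + D' * ∫ y in s₁..s₂, g y) =
          ENNReal.ofReal (g s₁) + D * ENNReal.ofReal (∫ y in s₁..s₂, g y) := by
        rw [ENNReal.ofReal_add (hg0 s₁) (mul_nonneg ENNReal.toReal_nonneg hI0),
          ENNReal.ofReal_mul ENNReal.toReal_nonneg, ENNReal.ofReal_toReal hD.ne]
      rw [hrw, hOR s₂ (h01.trans h12).le h2a.le, hOR s₁ h01.le (h12.trans h2a).le]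
      exact key
    exact (ENNReal.ofReal_le_ofReal_iff
      (add_nonneg (hg0 s₁) (mul_nonneg ENNReal.toReal_nonneg hI0))).mp k2
  -- primitive of g
  set P : ℝ → ℝ := fun x => ∫ y in (0:ℝ)..x, g y with hPdef
  have hPc : ContinuousOn P (Set.Icc 0 a) := by
    have := intervalIntegral.continuousOn_primitive_interval' hIa
      (Set.left_mem_uIcc (a := (0:ℝ)) (b := a))
    rwa [Set.uIcc_of_le ha.le] at this
  -- extend the inequality to closed endpoints by continuity
  have main2 : ∀ s₂ ∈ Set.Icc (0:ℝ) a, g s₂ ≤ g 0 + D' * P s₂ := by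
    intro s₂ hs₂
    rcases eq_or_lt_of_le hs₂.1 with h0 | h0
    · rw [← h0]
      simp [hPdef]
    · have hIoo : Set.Ioo (0:ℝ) (s₂ / 2) ∈ nhdsWithin (0:ℝ) (Set.Ioi 0) :=
        Ioo_mem_nhdsGT_of_mem ⟨le_refl 0, by linarith⟩
      have ht1 : Filter.Tendsto (fun ε => s₂ - ε) (nhdsWithin (0:ℝ) (Set.Ioi 0))
          (nhdsWithin s₂ (Set.Icc 0 a)) := by
        rw [tendsto_nhdsWithin_iff]
        constructor
        · have : Filter.Tendsto (fun ε : ℝ => s₂ - ε) (nhds 0) (nhds (s₂ - 0)) :=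
            (continuous_const.sub continuous_id).tendsto 0
          rw [sub_zero] at this
          exact this.mono_left nhdsWithin_le_nhds
        · refine Filter.mem_of_superset hIoo fun ε hε => ?_
          exact ⟨by linarith [hε.1, hε.2], by linarith [hε.1, hs₂.2]⟩
      have ht2 : Filter.Tendsto (fun ε : ℝ => ε) (nhdsWithin (0:ℝ) (Set.Ioi 0))
          (nhdsWithin 0 (Set.Icc 0 a)) := by
        rw [tendsto_nhdsWithin_iff]
        constructor
        · exact Filter.tendsto_id.mono_right nhdsWithin_le_nhds
        · refine Filter.mem_of_superset hIoo fun ε hε => ?_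
          exact ⟨hε.1.le, by linarith [hε.2, hs₂.2]⟩
      have hgs₂ : Filter.Tendsto (fun ε => g (s₂ - ε)) (nhdsWithin (0:ℝ) (Set.Ioi 0))
          (nhds (g s₂)) := ((hg s₂ hs₂).tendsto).comp ht1
      have hg0t : Filter.Tendsto (fun ε : ℝ => g ε) (nhdsWithin (0:ℝ) (Set.Ioi 0))
          (nhds (g 0)) := ((hg 0 ⟨le_refl 0, ha.le⟩).tendsto).comp ht2
      have hPs₂ : Filter.Tendsto (fun ε => P (s₂ - ε)) (nhdsWithin (0:ℝ) (Set.Ioi 0))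
          (nhds (P s₂)) := ((hPc s₂ hs₂).tendsto).comp ht1
      have hP0 : Filter.Tendsto (fun ε : ℝ => P ε) (nhdsWithin (0:ℝ) (Set.Ioi 0))
          (nhds 0) := by
        have := ((hPc 0 ⟨le_refl 0, ha.le⟩).tendsto).comp ht2
        have h00 : P 0 = 0 := by simp [hPdef]
        rw [h00] at this
        exact this
      have hsubint : ∀ x : ℝ, 0 ≤ x → x ≤ a → IntervalIntegrable g volume 0 x := by
        intro x hx0 hxa
        refine hIa.mono_set ?_
        rw [Set.uIcc_of_le hx0, Set.uIcc_of_le ha.le]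
        exact Set.Icc_subset_Icc le_rfl hxa
      have hIten : Filter.Tendsto (fun ε => ∫ y in ε..(s₂ - ε), g y)
          (nhdsWithin (0:ℝ) (Set.Ioi 0)) (nhds (P s₂)) := by
        have hcongr : ∀ᶠ ε in nhdsWithin (0:ℝ) (Set.Ioi 0),
            P (s₂ - ε) - P ε = ∫ y in ε..(s₂ - ε), g y := by
          refine Filter.mem_of_superset hIoo fun ε hε => ?_
          exact intervalIntegral.integral_interval_sub_left
            (hsubint (s₂ - ε) (by linarith [hε.1, hε.2]) (by linarith [hε.1, hs₂.2]))
            (hsubint ε hε.1.le (by linarith [hε.2, hs₂.2]))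
        have hlim : Filter.Tendsto (fun ε => P (s₂ - ε) - P ε)
            (nhdsWithin (0:ℝ) (Set.Ioi 0)) (nhds (P s₂ - 0)) := hPs₂.sub hP0
        rw [sub_zero] at hlim
        exact Filter.Tendsto.congr' hcongr hlim
      have hev : ∀ᶠ ε in nhdsWithin (0:ℝ) (Set.Ioi 0),
          g (s₂ - ε) ≤ g ε + D' * ∫ y in ε..(s₂ - ε), g y := by
        refine Filter.mem_of_superset hIoo fun ε hε => ?_
        exact hstarR ε (s₂ - ε) hε.1 (by linarith [hε.2]) (by linarith [hε.1, hs₂.2])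
      exact le_of_tendsto_of_tendsto hgs₂ (hg0t.add (tendsto_const_nhds.mul hIten)) hev
  -- Gronwall
  have hD'0 : 0 ≤ D' := ENNReal.toReal_nonneg
  have hFTC : ∀ x ∈ Set.Ico (0:ℝ) a, HasDerivWithinAt P (g x) (Set.Ici x) x := by
    intro x hx
    have hxa : x < a := hx.2
    have hInt : IntervalIntegrable g volume 0 x := by
      refine hIa.mono_set ?_
      rw [Set.uIcc_of_le hx.1, Set.uIcc_of_le ha.le]
      exact Set.Icc_subset_Icc le_rfl hxa.le
    have hmeasAt : StronglyMeasurableAtFilter g (nhdsWithin x (Set.Ioi x)) volume := by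
      refine ⟨Set.Ioc x a, ?_, ?_⟩
      · rw [← nhdsWithin_Ioc_eq_nhdsGT hxa]
        exact self_mem_nhdsWithin
      · exact (hg.mono fun y hy => ⟨hx.1.trans hy.1.le, hy.2⟩).aestronglyMeasurable
          measurableSet_Ioc
    have hcont : ContinuousWithinAt g (Set.Ioi x) x := by
      have h1 : ContinuousWithinAt g (Set.Ioc x a) x :=
        (hg x ⟨hx.1, hxa.le⟩).mono fun y hy => ⟨hx.1.trans hy.1.le, hy.2⟩
      have := h1
      rwa [ContinuousWithinAt, nhdsWithin_Ioc_eq_nhdsGT hxa] at this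
    exact intervalIntegral.integral_hasDerivWithinAt_right hInt hmeasAt hcont
  have hgron := norm_le_gronwallBound_of_norm_deriv_right_le (δ := 0) (K := D') (ε := g 0)
    hPc hFTC (by simp [hPdef]) ?_
  case _ =>
    -- use Gronwall to conclude
    have hs' := hgron s hs
    rw [sub_zero] at hs'
    have hP : P s ≤ gronwallBound 0 D' (g 0) s := (le_abs_self _).trans hs'
    have h1 : g s ≤ g 0 + D' * gronwallBound 0 D' (g 0) s := by
      have := main2 s hs
      nlinarith [mul_le_mul_of_nonneg_left hP hD'0]
    refine h1.trans ?_
    rcases eq_or_ne D' 0 with hD0 | hD0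
    · rw [hD0]
      simp
    · rw [gronwallBound_of_K_ne_0 hD0]
      have : g 0 + D' * (0 * Real.exp (D' * s) + g 0 / D' * (Real.exp (D' * s) - 1)) =
          g 0 * Real.exp (D' * s) := by
        field_simp
        ring
      rw [this]
  case _ =>
    intro x hx
    rw [Real.norm_eq_abs, Real.norm_eq_abs, abs_of_nonneg (hg0 x)]
    have := main2 x ⟨hx.1, hx.2.le⟩
    have hPx : P x ≤ |P x| := le_abs_self _
    nlinarith [mul_le_mul_of_nonneg_left hPx hD'0]
end
end

section
/- Let d ≥ 2, 1 < p < ∞, μ > 0 and N > 0. There exists a constant C > 0, depending only on d, p, N and μ, such that for every g ∈ L^p(B^d) with ‖g‖_{L^p(B^d)} ≤ N one has ‖g‖_{L¹(B^d)} ≤ C · ( ∫_{B^d} |g(x)| |x|^μ dx )^α, where α := (d-1) / ( d-1 + μ·p/(p-1) ). -/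
open MeasureTheory Real Set
open scoped ENNReal NNReal

noncomputable section

set_option maxHeartbeats 1000000 in
/-- Lemma 5.4 of the paper. Let `d ≥ 2`, `1 < p < ∞`, `μ > 0`, `N > 0`.
There is `C = C(d,p,N,μ) > 0` such that every `g ∈ L^p(B^d)` with `‖g‖_{L^p(B^d)} ≤ N`
satisfies `‖g‖_{L¹(B^d)} ≤ C (∫_{B^d} |g(x)| |x|^μ dx)^α` with
`α = (d-1)/(d-1 + μ p/(p-1))`. -/
theorem statement16 (d : ℕ) (hd : 2 ≤ d) (p μ N : ℝ)
    (hp : 1 < p) (hμ : 0 < μ) (hN : 0 < N) :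
    ∃ C : ℝ, 0 < C ∧
      ∀ g : Edim d → ℝ, Measurable g →
        eLpNorm g (ENNReal.ofReal p) (volume.restrict (unitBall d)) ≤ ENNReal.ofReal N →
        (∫⁻ x in unitBall d, ENNReal.ofReal |g x|)
          ≤ ENNReal.ofReal C *
            (∫⁻ x in unitBall d, ENNReal.ofReal (|g x| * ‖x‖ ^ μ)) ^
              (((d:ℝ) - 1) / ((d:ℝ) - 1 + μ * p / (p - 1))) := by
  classical
  haveI : Nonempty (Fin d) := ⟨⟨0, by omega⟩⟩
  set A : Set (Edim d) := unitBall d with hA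
  have hAball : A = Metric.ball 0 1 := rfl
  obtain ⟨D, hD⟩ : ∃ D : ℝ, D = (d : ℝ) := ⟨_, rfl⟩
  have hD2 : (2:ℝ) ≤ D := by rw [hD]; exact_mod_cast hd
  obtain ⟨q, hqdef⟩ : ∃ q : ℝ, q = p / (p - 1) := ⟨_, rfl⟩
  have hpq : p.HolderConjugate q := hqdef ▸ Real.HolderConjugate.conjExponent hp
  have hq0 : 0 < q := hpq.symm.pos
  have hp0 : 0 < p := hpq.pos
  obtain ⟨V, hV⟩ : ∃ V : ℝ, V = (volume (Metric.ball (0 : Edim d) 1)).toReal := ⟨_, rfl⟩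
  have hVfin : volume (Metric.ball (0 : Edim d) 1) ≠ ⊤ := measure_ball_lt_top.ne
  have hVpos : 0 < V :=
    hV ▸ ENNReal.toReal_pos (Metric.measure_ball_pos volume 0 one_pos).ne' hVfin
  obtain ⟨M, hM⟩ : ∃ M : ℝ, M = N * V ^ (1/q) := ⟨_, rfl⟩
  have hMpos : 0 < M := hM ▸ mul_pos hN (Real.rpow_pos_of_pos hVpos _)
  obtain ⟨Mt, hMt⟩ : ∃ Mt : ℝ, Mt = max M 1 := ⟨_, rfl⟩
  have hMt1 : (1:ℝ) ≤ Mt := hMt ▸ le_max_right _ _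
  have hMtpos : 0 < Mt := lt_of_lt_of_le one_pos hMt1
  have hMMt : M ≤ Mt := hMt ▸ le_max_left _ _
  have hden : 0 < D + μ * q := by nlinarith
  obtain ⟨θ, hθ⟩ : ∃ θ : ℝ, θ = q / (D + μ * q) := ⟨_, rfl⟩
  have hθpos : 0 < θ := hθ ▸ div_pos hq0 hden
  obtain ⟨α', hα'⟩ : ∃ x : ℝ, x = D / (D + μ * q) := ⟨_, rfl⟩
  obtain ⟨α, hαdef⟩ : ∃ x : ℝ, x = (D - 1) / (D - 1 + μ * q) := ⟨_, rfl⟩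
  have hden2 : 0 < D - 1 + μ * q := by nlinarith
  have hαpos : 0 < α := hαdef ▸ div_pos (by linarith) hden2
  have hαle : α ≤ α' := by
    rw [hαdef, hα', div_le_div_iff₀ hden2 hden]
    nlinarith [mul_pos hμ hq0]
  refine ⟨(M + Mt) * Mt ^ (-α), by positivity, ?_⟩
  intro g hg hgN
  have hmf : Measurable fun x : Edim d => ENNReal.ofReal |g x| := hg.abs.ennreal_ofReal
  have hmI : Measurable fun x : Edim d => ENNReal.ofReal (|g x| * ‖x‖ ^ μ) := by
    apply Measurable.ennreal_ofReal; apply hg.abs.mul; fun_prop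
  set L : ℝ≥0∞ := ∫⁻ x in A, ENNReal.ofReal |g x| with hL
  set I : ℝ≥0∞ := ∫⁻ x in A, ENNReal.ofReal (|g x| * ‖x‖ ^ μ) with hI
  -- Hölder on subsets
  have holder : ∀ S : Set (Edim d), S ⊆ A →
      (∫⁻ x in S, ENNReal.ofReal |g x|) ≤ ENNReal.ofReal N * (volume S) ^ (1/q) := by
    intro S hS
    have h0 := ENNReal.lintegral_mul_le_Lp_mul_Lq (volume.restrict S) hpq
      hmf.aemeasurable (aemeasurable_const (b := (1:ℝ≥0∞)))
    simp only [Pi.mul_apply, mul_one, ENNReal.one_rpow, lintegral_one,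
      Measure.restrict_apply_univ] at h0
    refine le_trans h0 ?_
    refine mul_le_mul' ?_ le_rfl
    have h3 : (∫⁻ x in S, ENNReal.ofReal |g x| ^ p) ≤ ∫⁻ x in A, ENNReal.ofReal |g x| ^ p :=
      lintegral_mono_set hS
    have h4 : eLpNorm g (ENNReal.ofReal p) (volume.restrict A)
        = (∫⁻ x in A, ENNReal.ofReal |g x| ^ p) ^ (1/p) := by
      rw [eLpNorm_eq_lintegral_rpow_enorm_toReal (by simp [hp0]) (by simp)]
      simp_rw [Real.enorm_eq_ofReal_abs, ENNReal.toReal_ofReal hp0.le]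
    calc (∫⁻ x in S, ENNReal.ofReal |g x| ^ p) ^ (1/p)
        ≤ (∫⁻ x in A, ENNReal.ofReal |g x| ^ p) ^ (1/p) :=
          ENNReal.rpow_le_rpow h3 (by positivity)
      _ = eLpNorm g (ENNReal.ofReal p) (volume.restrict A) := h4.symm
      _ ≤ ENNReal.ofReal N := hgN
  have hLM : L ≤ ENNReal.ofReal M := by
    have h := holder A subset_rfl
    rw [hAball] at h
    calc L ≤ ENNReal.ofReal N * (volume (Metric.ball (0:Edim d) 1)) ^ (1/q) := h
      _ = ENNReal.ofReal N * (ENNReal.ofReal V) ^ (1/q) := by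
          rw [hV, ENNReal.ofReal_toReal hVfin]
      _ = ENNReal.ofReal N * ENNReal.ofReal (V ^ (1/q)) := by
          rw [ENNReal.ofReal_rpow_of_nonneg hVpos.le (by positivity)]
      _ = ENNReal.ofReal M := by rw [← ENNReal.ofReal_mul hN.le, hM]
  have hLtop : L ≠ ⊤ := (lt_of_le_of_lt hLM ENNReal.ofReal_lt_top).ne
  have hIL : I ≤ L := by
    refine setLIntegral_mono hmf ?_
    intro x hx
    refine ENNReal.ofReal_le_ofReal ?_
    have hx1 : ‖x‖ < 1 := by simpa [hAball, Metric.mem_ball] using hx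
    have : ‖x‖ ^ μ ≤ 1 := Real.rpow_le_one (norm_nonneg x) hx1.le hμ.le
    nlinarith [abs_nonneg (g x)]
  have hItop : I ≠ ⊤ := (lt_of_le_of_lt hIL hLtop.lt_top).ne
  -- key split estimate
  have key : ∀ ε : ℝ, 0 < ε →
      L ≤ ENNReal.ofReal (N * ((ε ^ d) * V) ^ (1/q)) + ENNReal.ofReal (ε ^ (-μ)) * I := by
    intro ε hε
    have hsplit : L = (∫⁻ x in A ∩ Metric.ball 0 ε, ENNReal.ofReal |g x|)
        + ∫⁻ x in A \ Metric.ball 0 ε, ENNReal.ofReal |g x| := by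
      rw [hL, ← lintegral_inter_add_diff _ A Metric.isOpen_ball.measurableSet]
    have hterm1 : (∫⁻ x in A ∩ Metric.ball 0 ε, ENNReal.ofReal |g x|)
        ≤ ENNReal.ofReal (N * ((ε ^ d) * V) ^ (1/q)) := by
      calc (∫⁻ x in A ∩ Metric.ball 0 ε, ENNReal.ofReal |g x|)
          ≤ ENNReal.ofReal N * (volume (A ∩ Metric.ball 0 ε)) ^ (1/q) :=
            holder _ inter_subset_left
        _ ≤ ENNReal.ofReal N * (volume (Metric.ball (0:Edim d) ε)) ^ (1/q) :=
            mul_le_mul' le_rfl (ENNReal.rpow_le_rpow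
              (measure_mono inter_subset_right) (by positivity))
        _ = ENNReal.ofReal N * (ENNReal.ofReal ((ε ^ d) * V)) ^ (1/q) := by
            rw [Measure.addHaar_ball _ _ hε.le, finrank_euclideanSpace_fin,
              ENNReal.ofReal_mul (by positivity), hV, ENNReal.ofReal_toReal hVfin]
        _ = ENNReal.ofReal (N * ((ε ^ d) * V) ^ (1/q)) := by
            rw [ENNReal.ofReal_rpow_of_nonneg (by positivity) (by positivity),
              ← ENNReal.ofReal_mul hN.le]
    have hterm2 : (∫⁻ x in A \ Metric.ball 0 ε, ENNReal.ofReal |g x|)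
        ≤ ENNReal.ofReal (ε ^ (-μ)) * I := by
      have hpt : ∀ x ∈ A \ Metric.ball 0 ε,
          ENNReal.ofReal |g x| ≤ ENNReal.ofReal (ε ^ (-μ)) *
            ENNReal.ofReal (|g x| * ‖x‖ ^ μ) := by
        intro x hx
        have hxε : ε ≤ ‖x‖ := by
          have h := hx.2
          simp only [Metric.mem_ball, dist_zero_right, not_lt] at h
          exact h
        rw [← ENNReal.ofReal_mul (by positivity)]
        refine ENNReal.ofReal_le_ofReal ?_
        have h5 : ε ^ μ ≤ ‖x‖ ^ μ := Real.rpow_le_rpow hε.le hxε hμ.le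
        have h6 : 0 < ε ^ μ := Real.rpow_pos_of_pos hε μ
        rw [Real.rpow_neg hε.le, ← mul_assoc, inv_mul_eq_div, div_mul_eq_mul_div,
          le_div_iff₀ h6]
        exact mul_le_mul_of_nonneg_left h5 (abs_nonneg _)
      calc (∫⁻ x in A \ Metric.ball 0 ε, ENNReal.ofReal |g x|)
          ≤ ∫⁻ x in A \ Metric.ball 0 ε,
              ENNReal.ofReal (ε ^ (-μ)) * ENNReal.ofReal (|g x| * ‖x‖ ^ μ) :=
            setLIntegral_mono (hmI.const_mul _) hpt
        _ = ENNReal.ofReal (ε ^ (-μ)) *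
              ∫⁻ x in A \ Metric.ball 0 ε, ENNReal.ofReal (|g x| * ‖x‖ ^ μ) :=
            lintegral_const_mul _ hmI
        _ ≤ ENNReal.ofReal (ε ^ (-μ)) * I :=
            mul_le_mul' le_rfl (lintegral_mono_set diff_subset)
    rw [hsplit]
    exact add_le_add hterm1 hterm2
  obtain ⟨Ir, hIr⟩ : ∃ x : ℝ, x = I.toReal := ⟨_, rfl⟩
  obtain ⟨Lr, hLr⟩ : ∃ x : ℝ, x = L.toReal := ⟨_, rfl⟩
  have hIrnn : 0 ≤ Ir := hIr ▸ ENNReal.toReal_nonneg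
  have hexp : ((d:ℝ) - 1) / ((d:ℝ) - 1 + μ * p / (p - 1)) = α := by
    rw [hαdef, hD, mul_div_assoc, hqdef]
  rw [hexp]
  by_cases hI0 : I = 0
  · -- then g = 0 a.e. on A, so L = 0
    have hae : ∀ᵐ x ∂(volume.restrict A), ENNReal.ofReal (|g x| * ‖x‖ ^ μ) = 0 :=
      (lintegral_eq_zero_iff' hmI.aemeasurable).mp hI0
    have hne : ∀ᵐ x ∂(volume.restrict A), x ≠ (0 : Edim d) := by
      refine ae_restrict_of_ae ?_
      have h : volume ({(0:Edim d)} : Set (Edim d)) = 0 := measure_singleton _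
      rw [ae_iff]
      convert h using 2
      ext x; simp
    have hL0 : L = 0 := by
      rw [hL, lintegral_eq_zero_iff' hmf.aemeasurable]
      filter_upwards [hae, hne] with x h1 h2
      have hx : 0 < ‖x‖ ^ μ := Real.rpow_pos_of_pos (norm_pos_iff.mpr h2) μ
      rw [ENNReal.ofReal_eq_zero] at h1
      simp only [Pi.zero_apply, ENNReal.ofReal_eq_zero]
      nlinarith [abs_nonneg (g x)]
    rw [hL0]
    exact zero_le
  · have hIrpos : 0 < Ir := hIr ▸ ENNReal.toReal_pos hI0 hItop
    have hLrM : Lr ≤ M := hLr ▸ ENNReal.toReal_le_of_le_ofReal hMpos.le hLM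
    have hIrLr : Ir ≤ Lr := by rw [hIr, hLr]; exact ENNReal.toReal_mono hLtop hIL
    have hIrMt : Ir ≤ Mt := le_trans hIrLr (le_trans hLrM hMMt)
    obtain ⟨s, hs⟩ : ∃ x : ℝ, x = Ir / Mt := ⟨_, rfl⟩
    have hspos : 0 < s := hs ▸ div_pos hIrpos hMtpos
    obtain ⟨ε, hεs⟩ : ∃ x : ℝ, x = s ^ θ := ⟨_, rfl⟩
    have hεpos : 0 < ε := hεs ▸ Real.rpow_pos_of_pos hspos θ
    -- real version of key estimate
    have keyR : Lr ≤ N * ((ε ^ d) * V) ^ (1/q) + ε ^ (-μ) * Ir := by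
      rw [hLr]
      refine ENNReal.toReal_le_of_le_ofReal (by positivity) ?_
      have h7 := key ε hεpos
      have h8 : ENNReal.ofReal (ε ^ (-μ)) * I = ENNReal.ofReal (ε ^ (-μ) * Ir) := by
        rw [ENNReal.ofReal_mul (by positivity), hIr, ENNReal.ofReal_toReal hItop]
      rw [h8] at h7
      rw [ENNReal.ofReal_add (by positivity) (by positivity)]
      exact h7
    -- compute the two terms
    have hterm1eq : N * ((ε ^ d) * V) ^ (1/q) = M * s ^ α' := by
      have e1 : ε ^ d = s ^ (θ * D) := by
        rw [hεs, ← Real.rpow_natCast (s ^ θ) d, ← Real.rpow_mul hspos.le, hD]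
      rw [e1, Real.mul_rpow (Real.rpow_nonneg hspos.le _) hVpos.le,
        ← Real.rpow_mul hspos.le]
      have e2 : θ * D * (1/q) = α' := by
        rw [hθ, hα']
        field_simp
      rw [e2, hM]; ring
    have hterm2eq : ε ^ (-μ) * Ir = Mt * s ^ α' := by
      have e3 : ε ^ (-μ) = s ^ (-(θ * μ)) := by
        rw [hεs, ← Real.rpow_mul hspos.le, mul_neg]
      have e4 : Ir = s * Mt := by rw [hs]; field_simp
      have e5 : s ^ (-(θ * μ)) * s = s ^ (-(θ * μ) + 1) := by
        rw [Real.rpow_add hspos, Real.rpow_one]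
      have e6 : -(θ * μ) + 1 = α' := by
        rw [hθ, hα']
        field_simp
        ring
      rw [e3, e4, ← mul_assoc, e5, e6]; ring
    have hLrbound : Lr ≤ (M + Mt) * s ^ α' := by
      rw [hterm1eq, hterm2eq] at keyR; linarith
    -- from s^α' to Ir^α
    have eA : Ir ^ α * Ir ^ (α' - α) = Ir ^ α' := by
      rw [← Real.rpow_add hIrpos]; congr 1; ring
    have eB : Mt ^ (α' - α) * Mt ^ (-α') = Mt ^ (-α) := by
      rw [← Real.rpow_add hMtpos]; congr 1; ring
    have h9 : s ^ α' ≤ Ir ^ α * Mt ^ (-α) := by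
      calc s ^ α' = Ir ^ α' * Mt ^ (-α') := by
            rw [hs, Real.div_rpow hIrnn hMtpos.le, Real.rpow_neg hMtpos.le,
              div_eq_mul_inv]
        _ = (Ir ^ α * Ir ^ (α' - α)) * Mt ^ (-α') := by rw [eA]
        _ ≤ (Ir ^ α * Mt ^ (α' - α)) * Mt ^ (-α') := by
            refine mul_le_mul_of_nonneg_right (mul_le_mul_of_nonneg_left
              (Real.rpow_le_rpow hIrnn hIrMt (by linarith)) (Real.rpow_nonneg hIrnn _))
              (Real.rpow_nonneg hMtpos.le _)
        _ = Ir ^ α * Mt ^ (-α) := by rw [mul_assoc, eB]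
    have hfinal : Lr ≤ ((M + Mt) * Mt ^ (-α)) * Ir ^ α := by
      calc Lr ≤ (M + Mt) * s ^ α' := hLrbound
        _ ≤ (M + Mt) * (Ir ^ α * Mt ^ (-α)) :=
            mul_le_mul_of_nonneg_left h9 (by positivity)
        _ = ((M + Mt) * Mt ^ (-α)) * Ir ^ α := by ring
    -- conclude in ℝ≥0∞
    calc L = ENNReal.ofReal Lr := by rw [hLr, ENNReal.ofReal_toReal hLtop]
      _ ≤ ENNReal.ofReal (((M + Mt) * Mt ^ (-α)) * Ir ^ α) :=
          ENNReal.ofReal_le_ofReal hfinal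
      _ = ENNReal.ofReal ((M + Mt) * Mt ^ (-α)) * ENNReal.ofReal (Ir ^ α) :=
          ENNReal.ofReal_mul (by positivity)
      _ = ENNReal.ofReal ((M + Mt) * Mt ^ (-α)) * (ENNReal.ofReal Ir) ^ α := by
          rw [ENNReal.ofReal_rpow_of_nonneg hIrnn hαpos.le]
      _ = ENNReal.ofReal ((M + Mt) * Mt ^ (-α)) * I ^ α := by
          rw [hIr, ENNReal.ofReal_toReal hItop]
end
end
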